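/- arXiv:0812.2300 — 9 statements merged into one kernel-verified Lean document; each statement's English description precedes it below -/
import Mathlib

section
/- Let P be a set of finite subsets of ℕ closed under binary union (a join-subsemilattice of [ω]^{<ω}). Then either [ω]^{<ω} embeds into P as a join-subsemilattice, or P ordered by inclusion is wqo. -/
open Set Filter Topology

/-- The poset `Ω(ω*)`: pairs `(i,j)` of naturals with `i < j`,
ordered by `(i,j) ≤ (i',j')` iff `i' ≤ i ∧ j ≤ j'`. We only need the carrier and the join. -/
abbrev OmegaStar : Type := {p : ℕ × ℕ // p.1 < p.2}

/-- The join in `Ω(ω*)`: `(i,j) ⊔ (i',j') = (min i i', max j j')`. -/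
def omegaJoin (a b : OmegaStar) : OmegaStar :=
  ⟨(min a.1.1 b.1.1, max a.1.2 b.1.2),
    lt_of_le_of_lt (min_le_left _ _) (lt_of_lt_of_le a.2 (le_max_left _ _))⟩

/-- `Ω̲(ω*)`: `Ω(ω*)` with a new least element (`none`) adjoined. -/
abbrev OmegaStarBot : Type := Option OmegaStar

/-- The join in `Ω̲(ω*)`. -/
def omegaBotJoin : OmegaStarBot → OmegaStarBot → OmegaStarBot
  | none, b => b
  | a, none => a
  | some a, some b => some (omegaJoin a b)

/-- `I_{<ω}(Q)`: the finitely generated initial segments of `Q`,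
i.e. downward closures of finite subsets of `Q` (including `∅`). -/
def FinGenInit (Q : Type*) [Preorder Q] : Set (Set Q) :=
  {S | ∃ F : Finset Q, S = {x | ∃ y ∈ F, x ≤ y}}

/-- An ideal of a poset: a nonempty, up-directed, downward closed subset. -/
def IsIdeal {P : Type*} [Preorder P] (I : Set P) : Prop :=
  I.Nonempty ∧ (∀ x ∈ I, ∀ y ∈ I, ∃ z ∈ I, x ≤ z ∧ y ≤ z) ∧
    ∀ x y : P, x ≤ y → y ∈ I → x ∈ I

/-- A completely meet-irreducible ideal: an ideal `I` for which there is an ideal `J ⊋ I`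
contained in every ideal strictly containing `I`. -/
def CMIdeal {P : Type*} [Preorder P] (I : Set P) : Prop :=
  IsIdeal I ∧ ∃ J : Set P, IsIdeal J ∧ I ⊂ J ∧ ∀ K : Set P, IsIdeal K → I ⊂ K → J ⊆ K

/-- An ideal of a sub-poset `P` of `α`: a subset of `P`, nonempty, up-directed,
downward closed within `P`. -/
def IsIdealIn {α : Type*} [Preorder α] (P I : Set α) : Prop :=
  I ⊆ P ∧ I.Nonempty ∧ (∀ x ∈ I, ∀ y ∈ I, ∃ z ∈ I, x ≤ z ∧ y ≤ z) ∧
    ∀ x ∈ P, ∀ y ∈ I, x ≤ y → x ∈ I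

/-- A completely meet-irreducible ideal of the sub-poset `P`. -/
def CMIdealIn {α : Type*} [Preorder α] (P I : Set α) : Prop :=
  IsIdealIn P I ∧ ∃ J : Set α, IsIdealIn P J ∧ I ⊂ J ∧
    ∀ K : Set α, IsIdealIn P K → I ⊂ K → J ⊆ K

/-- `{x} ∨ J`, the ideal `{z : z ≤ x ⊔ y for some y ∈ J}`. -/
def JoinUp {P : Type*} [SemilatticeSup P] (x : P) (J : Set P) : Set P :=
  {z | ∃ y ∈ J, z ≤ x ⊔ y}

/-- A nonempty chain `𝓘` of ideals is separating if for every `I ∈ 𝓘` with `I ≠ ⋃𝓘` and every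
`x ∈ ⋃𝓘 \ I` there is `J ∈ 𝓘` with `I ⊄ {x} ∨ J`. -/
def Separating {P : Type*} [SemilatticeSup P] (𝓘 : Set (Set P)) : Prop :=
  ∀ I ∈ 𝓘, I ≠ ⋃₀ 𝓘 → ∀ x ∈ (⋃₀ 𝓘) \ I, ∃ J ∈ 𝓘, ¬ I ⊆ JoinUp x J

/-- An independent subset of a join-semilattice: no member is below the join of finitely many
of the others. -/
def IndepSet {P : Type*} [SemilatticeSup P] (X : Set P) : Prop :=
  ∀ x ∈ X, ∀ F : Finset P, ∀ hF : F.Nonempty, ↑F ⊆ X \ {x} → ¬ x ≤ F.sup' hF id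

/-- `ℱ^{<ω}`: unions of finite subfamilies of `ℱ` (including `∅`). -/
def finUnions {α : Type*} (ℱ : Set (Set α)) : Set (Set α) :=
  {S | ∃ G : Finset (Set α), ↑G ⊆ ℱ ∧ S = ⋃₀ ↑G}

/-- `ℱ^∪`: unions of arbitrary subfamilies of `ℱ`. -/
def arbUnions {α : Type*} (ℱ : Set (Set α)) : Set (Set α) :=
  {S | ∃ G ⊆ ℱ, S = ⋃₀ G}

/-- membership helper: the value `f S = c ∪ S.sup g` lies in `P`. -/
theorem aux_mem_P {P : Set (Finset ℕ)} (hP : ∀ a ∈ P, ∀ b ∈ P, a ∪ b ∈ P) {c : Finset ℕ} (hc : c ∈ P)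
    {g : ℕ → Finset ℕ} (hg : ∀ i, g i ∈ P) (S : Finset ℕ) :
    c ∪ S.sup g ∈ P := by
  classical
  induction S using Finset.induction_on with
  | empty => simpa using hc
  | @insert a S hnot ih =>
      rw [Finset.sup_insert]
      have : c ∪ (g a ⊔ S.sup g) = g a ∪ (c ∪ S.sup g) := by
        change c ∪ (g a ∪ S.sup g) = _
        ext x; simp [Finset.mem_union]; tauto
      rw [this]
      exact hP _ (hg a) _ ih


theorem aux_separated {P : Set (Finset ℕ)} {A : Set (Finset ℕ)} (hAP : A ⊆ P)
    (hA : IsAntichain (· ≤ ·) A) (hinf : A.Infinite) :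
    ∃ b : ℕ → Finset ℕ, ∃ t : ℕ → ℕ, (∀ i, b i ∈ P) ∧
      (∀ i, t i ∈ b i) ∧ (∀ i j, i ≠ j → t i ∉ b j) := by
  classical
  set e := hinf.natEmbedding A with he
  set a : ℕ → Finset ℕ := fun n => (e n).1 with ha
  have haA : ∀ n, a n ∈ A := fun n => (e n).2
  have hainj : Function.Injective a := fun m n h => by
    have := e.injective (Subtype.ext h); exact this
  -- convergent subsequence in Cantor space
  set χ : ℕ → (ℕ → Bool) := fun n k => decide (k ∈ a n) with hχ
  obtain ⟨Lb, φ, hφ, hconv⟩ := CompactSpace.tendsto_subseq χ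
  have hcoord : ∀ k, ∀ᶠ i in atTop, χ (φ i) k = Lb k := by
    intro k
    have h1 := tendsto_pi_nhds.mp hconv k
    rw [show 𝓝 (Lb k) = pure (Lb k) from congrFun (nhds_discrete Bool) _] at h1
    exact tendsto_pure.mp h1
  set L : Set ℕ := {k | Lb k = true} with hL
  have hmemiff : ∀ k, ∀ᶠ i in atTop, (k ∈ a (φ i) ↔ k ∈ L) := by
    intro k
    filter_upwards [hcoord k] with i hi
    simp only [hL, mem_setOf_eq, ← hi, hχ, decide_eq_true_eq]
  -- every a (φ i) has a point outside L
  have hout : ∀ i, ∃ k ∈ a (φ i), k ∉ L := by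
    intro i
    by_contra hcon
    push_neg at hcon
    have hev : ∀ᶠ j in atTop, ∀ k ∈ a (φ i), k ∈ a (φ j) := by
      rw [Filter.eventually_all_finset]
      intro k hk
      filter_upwards [hmemiff k] with j hj
      exact hj.mpr (hcon k hk)
    obtain ⟨j, hj1, hj2⟩ := (hev.and (eventually_gt_atTop i)).exists
    have hle : a (φ i) ≤ a (φ j) := fun k hk => hj1 k hk
    have hne : a (φ i) ≠ a (φ j) := fun h => absurd (hφ.injective (hainj h)) hj2.ne'.symm
    exact hA (haA _) (haA _) hne hle
  -- each point outside L is in only finitely many a (φ j): get bound function F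
  have hF : ∀ i, ∃ N, ∀ j ≥ N, ∀ k ∈ a (φ i), k ∉ L → k ∉ a (φ j) := by
    intro i
    have hev : ∀ᶠ j in atTop, ∀ k ∈ a (φ i), k ∉ L → k ∉ a (φ j) := by
      rw [Filter.eventually_all_finset]
      intro k hk
      by_cases hkL : k ∈ L
      · filter_upwards with j h; exact absurd hkL h
      · filter_upwards [hmemiff k] with j hj h hmem
        exact hkL (hj.mp hmem)
    exact eventually_atTop.mp hev
  choose F hFspec using hF
  -- cumulative bound
  set G : ℕ → ℕ := fun m => (Finset.range (m + 1)).sup F with hG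
  -- the subsequence ψ
  set ψ : ℕ → ℕ := fun n => Nat.rec 0 (fun _ p => max (G p) (p + 1)) n with hψ
  have hψsucc : ∀ n, ψ (n + 1) = max (G (ψ n)) (ψ n + 1) := fun n => rfl
  have hψmono : StrictMono ψ := strictMono_nat_of_lt_succ (fun n => by
    rw [hψsucc]; exact lt_of_lt_of_le (Nat.lt_succ_self _) (le_max_right _ _))
  -- key disjointness: for m < n, a (φ (ψ n)) ∩ (a (φ (ψ m)) \ L) = ∅
  have hdisj : ∀ m n, m < n → ∀ k ∈ a (φ (ψ m)), k ∉ L → k ∉ a (φ (ψ n)) := by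
    intro m n hmn k hk hkL
    have h1 : F (ψ m) ≤ G (ψ m) := Finset.le_sup (Finset.mem_range.mpr (Nat.lt_succ_self _))
    have h2 : G (ψ m) ≤ ψ (m + 1) := by rw [hψsucc]; exact le_max_left _ _
    have h3 : ψ (m + 1) ≤ ψ n := hψmono.monotone hmn
    exact hFspec (ψ m) (ψ n) (le_trans h1 (le_trans h2 h3)) k hk hkL
  refine ⟨fun i => a (φ (ψ i)), fun i => (hout (ψ i)).choose, fun i => hAP (haA _), fun i =>
    (hout (ψ i)).choose_spec.1, ?_⟩
  intro i j hij hmem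
  have hti := (hout (ψ i)).choose_spec.1
  have htiL := (hout (ψ i)).choose_spec.2
  rcases lt_or_gt_of_ne hij with h | h
  · exact hdisj i j h _ hti htiL hmem
  · exact hdisj j i h _ hmem htiL hti

/-- A join-subsemilattice `P` of `[ω]^{<ω}` either contains a copy of `[ω]^{<ω}`
as a join-subsemilattice, or is wqo. -/
theorem finset_subsemilattice_dichotomy (P : Set (Finset ℕ))
    (hP : ∀ a ∈ P, ∀ b ∈ P, a ∪ b ∈ P) :
    (∃ f : Finset ℕ → Finset ℕ, (∀ a, f a ∈ P) ∧ Function.Injective f ∧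
        ∀ a b, f (a ∪ b) = f a ∪ f b) ∨
      (WellFounded (fun a b : {x : Finset ℕ // x ∈ P} => a < b) ∧
        ∀ A : Set (Finset ℕ), A ⊆ P → IsAntichain (· ≤ ·) A → A.Finite) := by
  classical
  by_cases hac : ∀ A : Set (Finset ℕ), A ⊆ P → IsAntichain (· ≤ ·) A → A.Finite
  · refine Or.inr ⟨?_, hac⟩
    have hsub : ∀ a b : {x : Finset ℕ // x ∈ P}, a < b → a.1.card < b.1.card := by
      intro a b h
      exact Finset.card_lt_card (by exact_mod_cast h)
    exact Subrelation.wf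
      (r := InvImage (· < ·) (fun a : {x : Finset ℕ // x ∈ P} => a.1.card))
      (fun {a b} h => hsub a b h) (InvImage.wf _ Nat.lt_wfRel.wf)
  · push_neg at hac
    obtain ⟨A, hAP, hA, hAinf⟩ := hac
    obtain ⟨b, t, hbP, ht, ht'⟩ := aux_separated hAP hA hAinf
    refine Or.inl ⟨fun S => b 0 ∪ S.sup (fun i => b (i + 1)), ?_, ?_, ?_⟩
    · exact fun S => aux_mem_P hP (hbP 0) (fun i => hbP (i + 1)) S
    · -- injectivity
      have key : ∀ (S : Finset ℕ) (i : ℕ),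
          i ∈ S ↔ t (i + 1) ∈ b 0 ∪ S.sup (fun i => b (i + 1)) := by
        intro S i
        constructor
        · intro hi
          exact Finset.mem_union_right _ (Finset.mem_sup.mpr ⟨i, hi, ht (i + 1)⟩)
        · intro hmem
          rcases Finset.mem_union.mp hmem with h | h
          · exact absurd h (ht' (i + 1) 0 (Nat.succ_ne_zero i))
          · obtain ⟨j, hj, hmj⟩ := Finset.mem_sup.mp h
            have : i + 1 = j + 1 := by
              by_contra hne
              exact ht' (i + 1) (j + 1) hne hmj
            have : i = j := Nat.succ_injective this
            exact this ▸ hj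
      intro S T hST
      have hST' : b 0 ∪ S.sup (fun i => b (i + 1)) = b 0 ∪ T.sup (fun i => b (i + 1)) := hST
      ext i
      rw [key S i, key T i, hST']
    · intro S T
      show b 0 ∪ (S ∪ T).sup (fun i => b (i + 1)) =
        (b 0 ∪ S.sup (fun i => b (i + 1))) ∪ (b 0 ∪ T.sup (fun i => b (i + 1)))
      rw [Finset.sup_union]
      ext x
      simp only [Finset.mem_union, Finset.sup_eq_union, sup_eq_union]
      tauto
end

section
/- A join-semilattice P contains an infinite independent subset if and only if P has an infinite separating chain of ideals. -/
open Set

section AuxForSeparating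

variable {P : Type*} [SemilatticeSup P]

private lemma aux_ideal_bound {I : Set P} (hI : IsIdeal I) :
    ∀ G : Finset P, ↑G ⊆ I → ∃ u ∈ I, ∀ g ∈ G, g ≤ u := by
  classical
  intro G
  induction G using Finset.induction_on with
  | empty =>
    intro _
    obtain ⟨u, hu⟩ := hI.1
    exact ⟨u, hu, by simp⟩
  | insert _ _ ha ih =>
    rename_i a s
    intro hsub
    obtain ⟨u, hu, hub⟩ := ih (fun x hx => hsub (Finset.mem_insert_of_mem hx))
    have haI : a ∈ I := hsub (by simp)
    obtain ⟨v, hv, hav, huv⟩ := hI.2.1 a haI u hu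
    refine ⟨v, hv, fun g hg => ?_⟩
    rcases Finset.mem_insert.1 hg with h | h
    · exact h ▸ hav
    · exact (hub g h).trans huv

private lemma aux_sUnion_ideal {𝓘 : Set (Set P)} (hne : 𝓘.Nonempty)
    (hId : ∀ I ∈ 𝓘, IsIdeal I) (hchain : IsChain (· ⊆ ·) 𝓘) : IsIdeal (⋃₀ 𝓘) := by
  refine ⟨?_, ?_, ?_⟩
  · obtain ⟨I, hI⟩ := hne
    obtain ⟨x, hx⟩ := (hId I hI).1
    exact ⟨x, I, hI, hx⟩
  · rintro x ⟨I, hI, hxI⟩ y ⟨J, hJ, hyJ⟩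
    rcases eq_or_ne I J with rfl | hIJ
    · obtain ⟨z, hz, h1, h2⟩ := (hId I hI).2.1 x hxI y hyJ
      exact ⟨z, ⟨I, hI, hz⟩, h1, h2⟩
    · rcases hchain hI hJ hIJ with h | h
      · obtain ⟨z, hz, h1, h2⟩ := (hId J hJ).2.1 x (h hxI) y hyJ
        exact ⟨z, ⟨J, hJ, hz⟩, h1, h2⟩
      · obtain ⟨z, hz, h1, h2⟩ := (hId I hI).2.1 x hxI y (h hyJ)
        exact ⟨z, ⟨I, hI, hz⟩, h1, h2⟩
  · rintro x y hxy ⟨I, hI, hyI⟩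
    exact ⟨I, hI, (hId I hI).2.2 x y hxy hyI⟩

private lemma aux_indep_not_le {X : Set P} (hX : IndepSet X) {g : ℕ → P}
    (hg : Function.Injective g) (hgX : ∀ n, g n ∈ X) (m : ℕ) (S : Finset ℕ)
    (hS : S.Nonempty) (hmS : m ∉ S) : ¬ g m ≤ S.sup' hS g := by
  classical
  intro hle
  have hne : (S.image g).Nonempty := hS.image g
  have heq : (S.image g).sup' hne id = S.sup' hS g := by
    rw [Finset.sup'_image]
    rfl
  refine hX (g m) (hgX m) (S.image g) hne ?_ (heq ▸ hle)
  intro z hz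
  obtain ⟨k, hk, rfl⟩ := Finset.mem_image.1 hz
  refine ⟨hgX k, fun h => hmS ?_⟩
  have : g k = g m := h
  rwa [hg this] at hk

private lemma aux_exists_seq {α : Type*} (step : α → α) (init : α) :
    ∃ f : ℕ → α, f 0 = init ∧ ∀ n, f (n + 1) = step (f n) :=
  ⟨fun n => step^[n] init, by simp, fun n => Function.iterate_succ_apply' step n init⟩

end AuxForSeparating

/-- A join-semilattice `P` contains an infinite independent subset iff it has an
infinite separating chain of ideals. -/
theorem infinite_indep_iff_separating_chain {P : Type*} [SemilatticeSup P] :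
    (∃ X : Set P, X.Infinite ∧ IndepSet X) ↔
      ∃ 𝓘 : Set (Set P), (∀ I ∈ 𝓘, IsIdeal I) ∧ IsChain (· ⊆ ·) 𝓘 ∧ 𝓘.Infinite ∧
        Separating 𝓘 := by
  classical
  constructor
  · -- Forward: infinite independent set gives separating chain
    rintro ⟨X, hXinf, hXind⟩
    obtain ⟨g, hginj, hgX⟩ : ∃ g : ℕ → P, Function.Injective g ∧ ∀ n, g n ∈ X := by
      obtain ⟨e⟩ : Nonempty (ℕ ↪ X) := ⟨Set.Infinite.natEmbedding X hXinf⟩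
      exact ⟨fun n => (e n : P), fun a b h => e.injective (Subtype.ext h), fun n => (e n).2⟩
    set I : ℕ → Set P := fun n =>
      {z | ∃ S : Finset ℕ, ∃ hS : S.Nonempty, (∀ k ∈ S, n ≤ k) ∧ z ≤ S.sup' hS g} with hIdef
    have hgIn : ∀ n, g n ∈ I n := by
      intro n
      exact ⟨{n}, Finset.singleton_nonempty n, by simp, by simp⟩
    have hmono : ∀ {m n : ℕ}, m ≤ n → I n ⊆ I m := by
      rintro m n hmn z ⟨S, hS, hSn, hz⟩
      exact ⟨S, hS, fun k hk => hmn.trans (hSn k hk), hz⟩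
    have hgnot : ∀ {n m : ℕ}, n < m → g n ∉ I m := by
      rintro n m hnm ⟨S, hS, hSm, hz⟩
      have hnS : n ∉ S := fun h => absurd (hSm n h) (by omega)
      exact aux_indep_not_le hXind hginj hgX n S hS hnS hz
    have hIinj : Function.Injective I := by
      intro a b hab
      by_contra hne
      rcases Ne.lt_or_gt hne with h | h
      · exact hgnot h (hab ▸ hgIn a)
      · exact hgnot h (hab.symm ▸ hgIn b)
    refine ⟨Set.range I, ?_, ?_, ?_, ?_⟩
    · rintro _ ⟨n, rfl⟩
      refine ⟨⟨g n, hgIn n⟩, ?_, ?_⟩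
      · rintro x ⟨S, hS, hSn, hxz⟩ y ⟨T, hT, hTn, hyz⟩
        have hST : (S ∪ T).Nonempty := hS.mono Finset.subset_union_left
        refine ⟨(S ∪ T).sup' hST g, ⟨S ∪ T, hST, ?_, le_rfl⟩, ?_, ?_⟩
        · intro k hk
          rcases Finset.mem_union.1 hk with h | h
          · exact hSn k h
          · exact hTn k h
        · exact hxz.trans (by rw [Finset.sup'_union hS hT g]; exact le_sup_left)
        · exact hyz.trans (by rw [Finset.sup'_union hS hT g]; exact le_sup_right)
      · rintro x y hxy ⟨S, hS, hSn, hyz⟩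
        exact ⟨S, hS, hSn, hxy.trans hyz⟩
    · rintro _ ⟨n, rfl⟩ _ ⟨m, rfl⟩ hne
      rcases le_total n m with h | h
      · exact Or.inr (hmono h)
      · exact Or.inl (hmono h)
    · exact Set.infinite_range_of_injective hIinj
    · rintro _ ⟨n, rfl⟩ hne x ⟨hxU, hxn⟩
      obtain ⟨_, ⟨m, rfl⟩, hxm⟩ := hxU
      obtain ⟨S, hS, hSm, hxle⟩ := hxm
      set m' : ℕ := S.max' hS + n + 1 with hm'
      have hm'n : n ≤ m' := by omega
      have hm'S : ∀ j ∈ S, j < m' := fun j hj => by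
        have := S.le_max' j hj; omega
      refine ⟨I (m' + 1), ⟨m' + 1, rfl⟩, fun hsub => ?_⟩
      have hgm' : g m' ∈ I n := ⟨{m'}, Finset.singleton_nonempty m', by simpa using hm'n, by simp⟩
      obtain ⟨y, ⟨T, hT, hTk, hyle⟩, hle⟩ := hsub hgm'
      have hST : (S ∪ T).Nonempty := hS.mono Finset.subset_union_left
      have hm'ST : m' ∉ S ∪ T := by
        intro h
        rcases Finset.mem_union.1 h with h | h
        · exact absurd (hm'S m' h) (lt_irrefl m')
        · have := hTk m' h; omega
      refine aux_indep_not_le hXind hginj hgX m' (S ∪ T) hST hm'ST ?_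
      calc g m' ≤ x ⊔ y := hle
        _ ≤ S.sup' hS g ⊔ T.sup' hT g := sup_le_sup hxle hyle
        _ = (S ∪ T).sup' _ g := (Finset.sup'_union hS hT g).symm
  · -- Backward: separating chain gives infinite independent set
    rintro ⟨𝓘, hId, hchain, hinf, hsep⟩
    set U := ⋃₀ 𝓘 with hU
    have hUid : IsIdeal U := aux_sUnion_ideal hinf.nonempty hId hchain
    obtain ⟨I0, hI0, b0, hb0U, hb0not⟩ : ∃ I0 ∈ 𝓘, ∃ b0 ∈ U, b0 ∉ I0 := by
      obtain ⟨A, hA, B, hB, hAB⟩ := hinf.nontrivial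
      rcases hchain hA hB hAB with h | h
      · obtain ⟨x, hxB, hxA⟩ := Set.exists_of_ssubset ⟨h, fun h' => hAB (subset_antisymm h h')⟩
        exact ⟨A, hA, x, ⟨B, hB, hxB⟩, hxA⟩
      · obtain ⟨x, hxA, hxB⟩ :=
          Set.exists_of_ssubset ⟨h, fun h' => hAB.symm (subset_antisymm h h')⟩
        exact ⟨B, hB, x, ⟨A, hA, hxA⟩, hxB⟩
    have hstep : ∀ s : Set P × P, ∃ t : (Set P × P) × P,
        s.1 ∈ 𝓘 → s.2 ∈ U → s.2 ∉ s.1 →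
          t.1.1 ∈ 𝓘 ∧ t.1.2 = s.2 ⊔ t.2 ∧ t.2 ∈ s.1 ∧ t.1.2 ∈ U ∧ t.1.2 ∉ t.1.1 ∧
            ∀ y ∈ t.1.1, ¬ t.2 ≤ s.2 ⊔ y := by
      intro s
      by_cases hs : s.1 ∈ 𝓘 ∧ s.2 ∈ U ∧ s.2 ∉ s.1
      · obtain ⟨hs1, hs2, hs3⟩ := hs
        have hneU : s.1 ≠ U := fun h => hs3 (h ▸ hs2)
        obtain ⟨J, hJ, hJsub⟩ := hsep s.1 hs1 hneU s.2 ⟨hs2, hs3⟩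
        rw [Set.not_subset] at hJsub
        obtain ⟨z, hzI, hznot⟩ := hJsub
        have hzJ' : ∀ y ∈ J, ¬ z ≤ s.2 ⊔ y := fun y hy hle => hznot ⟨y, hy, hle⟩
        have hzU : z ∈ U := ⟨s.1, hs1, hzI⟩
        have hsupU : s.2 ⊔ z ∈ U := by
          obtain ⟨w, hwU, hw1, hw2⟩ := hUid.2.1 s.2 hs2 z hzU
          exact hUid.2.2 _ w (sup_le hw1 hw2) hwU
        have hzJ : z ∉ J := fun h => hzJ' z h le_sup_right
        have hsupJ : s.2 ⊔ z ∉ J := fun h => hzJ ((hId J hJ).2.2 z _ le_sup_right h)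
        exact ⟨((J, s.2 ⊔ z), z), fun _ _ _ => ⟨hJ, rfl, hzI, hsupU, hsupJ, hzJ'⟩⟩
      · exact ⟨((s.1, s.2), s.2), fun h1 h2 h3 => absurd ⟨h1, h2, h3⟩ hs⟩
    choose step hstepspec using hstep
    obtain ⟨f, hf0, hfs⟩ := aux_exists_seq (fun s => (step s).1) (I0, b0)
    set a : ℕ → P := fun n => (step (f n)).2 with ha
    have hinv : ∀ n, (f n).1 ∈ 𝓘 ∧ (f n).2 ∈ U ∧ (f n).2 ∉ (f n).1 := by
      intro n
      induction n with
      | zero => rw [hf0]; exact ⟨hI0, hb0U, hb0not⟩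
      | succ k ih =>
        obtain ⟨h1, h2, h3, h4, h5, h6⟩ := hstepspec (f k) ih.1 ih.2.1 ih.2.2
        rw [hfs k]
        exact ⟨h1, h4, h5⟩
    have hspec : ∀ n, (f (n+1)).1 ∈ 𝓘 ∧ (f (n+1)).2 = (f n).2 ⊔ a n ∧ a n ∈ (f n).1 ∧
        (f (n+1)).2 ∈ U ∧ (f (n+1)).2 ∉ (f (n+1)).1 ∧
        ∀ y ∈ (f (n+1)).1, ¬ a n ≤ (f n).2 ⊔ y := by
      intro n
      rw [hfs n]
      exact hstepspec (f n) (hinv n).1 (hinv n).2.1 (hinv n).2.2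
    have hkey : ∀ n, ∀ y ∈ (f (n+1)).1, ¬ a n ≤ (f n).2 ⊔ y := fun n => (hspec n).2.2.2.2.2
    have haI : ∀ n, a n ∈ (f n).1 := fun n => (hspec n).2.2.1
    have hanot : ∀ n, a n ∉ (f (n+1)).1 := fun n h => hkey n (a n) h le_sup_right
    have hBmono : ∀ {n m : ℕ}, n ≤ m → (f n).2 ≤ (f m).2 := by
      intro n m hnm
      induction m with
      | zero =>
        have h0 : n = 0 := by omega
        rw [h0]
      | succ k ih =>
        rcases Nat.lt_or_ge n (k+1) with h | h
        · calc (f n).2 ≤ (f k).2 := ih (by omega)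
            _ ≤ (f (k+1)).2 := by rw [(hspec k).2.1]; exact le_sup_left
        · have h1 : n = k + 1 := by omega
          rw [h1]
    have haB : ∀ {n m : ℕ}, n < m → a n ≤ (f m).2 := by
      intro n m hnm
      calc a n ≤ (f (n+1)).2 := by rw [(hspec n).2.1]; exact le_sup_right
        _ ≤ (f m).2 := hBmono hnm
    have hIdec : ∀ n, (f (n+1)).1 ⊆ (f n).1 := by
      intro n
      rcases eq_or_ne (f n).1 (f (n+1)).1 with h | h
      · rw [h]
      · rcases hchain (hinv n).1 (hinv (n+1)).1 h with hsub | hsub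
        · exact absurd (hsub (haI n)) (hanot n)
        · exact hsub
    have hImono : ∀ {n m : ℕ}, n ≤ m → (f m).1 ⊆ (f n).1 := by
      intro n m hnm
      induction m with
      | zero =>
        have h0 : n = 0 := by omega
        rw [h0]
      | succ k ih =>
        rcases Nat.lt_or_ge n (k+1) with h | h
        · exact (hIdec k).trans (ih (by omega))
        · have h1 : n = k + 1 := by omega
          rw [h1]
    have hane : ∀ {n m : ℕ}, n < m → a n ≠ a m := by
      intro n m hnm heq
      have : a m ∈ (f (n+1)).1 := hImono hnm (haI m)
      exact hanot n (heq ▸ this)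
    have hainj : Function.Injective a := by
      intro x y hxy
      by_contra hne
      rcases Ne.lt_or_gt hne with h | h
      · exact hane h hxy
      · exact hane h hxy.symm
    refine ⟨Set.range a, Set.infinite_range_of_injective hainj, ?_⟩
    rintro x ⟨n, rfl⟩ F hF hFsub hle
    -- each element of F is ≤ (f n).2 or in (f (n+1)).1
    have hsplit : ∀ e ∈ F, e ≤ (f n).2 ∨ e ∈ (f (n+1)).1 := by
      intro e he
      obtain ⟨⟨k, rfl⟩, hene⟩ := hFsub he
      have hkn : k ≠ n := fun h => hene (by rw [h]; rfl)
      rcases Ne.lt_or_gt hkn with h | h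
      · exact Or.inl (haB h)
      · exact Or.inr (hImono h (haI k))
    obtain ⟨u, hu, hub⟩ := aux_ideal_bound (hId _ (hinv (n+1)).1)
      (F.filter (· ∈ (f (n+1)).1)) (fun e he => (Finset.mem_filter.1 he).2)
    refine hkey n u hu (hle.trans (Finset.sup'_le hF id fun e he => ?_))
    rcases hsplit e he with h | h
    · exact le_sup_of_le_left h
    · exact le_sup_of_le_right (hub e (Finset.mem_filter.2 ⟨he, h⟩))
end

section
/- Let P be a join-semilattice. The following are equivalent: (a) either there is a strictly decreasing infinite sequence in P, or Ω(ω*) embeds into P as a join-subsemilattice; (b) there is a strictly decreasing sequence I₀ ⊋ I₁ ⊋ I₂ ⊋ ⋯ of ideals of P such that for every infinite set A ⊆ ℕ the chain {Iₙ : n ∈ A} is non-separating. -/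
open Set

namespace OmegaAux

variable {P : Type*} [SemilatticeSup P]

lemma le_foldl_sup (l : List P) (a : P) : a ≤ l.foldl (· ⊔ ·) a := by
  induction l generalizing a with
  | nil => exact le_rfl
  | cons b t ih => exact le_trans le_sup_left (ih (a ⊔ b))

lemma mem_le_foldl_sup {l : List P} {b : P} (hb : b ∈ l) (a : P) :
    b ≤ l.foldl (· ⊔ ·) a := by
  induction l generalizing a with
  | nil => cases hb
  | cons c t ih =>
    rcases List.mem_cons.1 hb with h | h
    · subst h; exact le_trans le_sup_right (le_foldl_sup t (a ⊔ b))
    · exact ih h (a ⊔ c)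

lemma foldl_sup_mem {S : Set P} (hS : ∀ u ∈ S, ∀ v ∈ S, u ⊔ v ∈ S) {a : P} (ha : a ∈ S)
    {l : List P} (hl : ∀ b ∈ l, b ∈ S) : l.foldl (· ⊔ ·) a ∈ S := by
  induction l generalizing a with
  | nil => exact ha
  | cons c t ih =>
    exact ih (hS a ha c (hl c (by simp))) (fun b hb => hl b (by simp [hb]))

open Classical in
noncomputable def pickY (I : ℕ → Set P) (xi : P) (l : ℕ) (z : P) : P :=
  if h : ∃ y ∈ I l, z ≤ xi ⊔ y then h.choose else xi

lemma pickY_mem {I : ℕ → Set P} {xi : P} {l : ℕ} {z : P} (h : ∃ y ∈ I l, z ≤ xi ⊔ y) :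
    pickY I xi l z ∈ I l := by
  rw [pickY, dif_pos h]; exact h.choose_spec.1

lemma pickY_le {I : ℕ → Set P} {xi : P} {l : ℕ} {z : P} (h : ∃ y ∈ I l, z ≤ xi ⊔ y) :
    z ≤ xi ⊔ pickY I xi l z := by
  rw [pickY, dif_pos h]; exact h.choose_spec.2

open Classical in
noncomputable def pickG (I : ℕ → Set P) (l : ℕ) (u : P) : P :=
  if h : ∃ g ∈ I l, ¬ g ≤ u then h.choose else u

lemma pickG_mem {I : ℕ → Set P} {l : ℕ} {u : P} (h : ∃ g ∈ I l, ¬ g ≤ u) :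
    pickG I l u ∈ I l := by
  rw [pickG, dif_pos h]; exact h.choose_spec.1

lemma pickG_not_le {I : ℕ → Set P} {l : ℕ} {u : P} (h : ∃ g ∈ I l, ¬ g ≤ u) :
    ¬ pickG I l u ≤ u := by
  rw [pickG, dif_pos h]; exact h.choose_spec.2

def mseq (M : ℕ → ℕ) (r₀ : ℕ) : ℕ → ℕ
  | 0 => M r₀
  | n+1 => M (mseq M r₀ n)

def mp (M : ℕ → ℕ) (r₀ : ℕ) : ℕ → ℕ
  | 0 => r₀
  | n+1 => mseq M r₀ n

lemma mseq_eq (M : ℕ → ℕ) (r₀ : ℕ) (n : ℕ) : mseq M r₀ n = M (mp M r₀ n) := by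
  cases n <;> rfl

variable {M : ℕ → ℕ} {r₀ : ℕ}

lemma mp_lt_mseq (hM : ∀ s, s < M s) (n : ℕ) : mp M r₀ n < mseq M r₀ n := by
  rw [mseq_eq]; exact hM _

lemma mseq_strictMono (hM : ∀ s, s < M s) : StrictMono (mseq M r₀) :=
  strictMono_nat_of_lt_succ fun n => hM _

lemma mp_mono (hM : ∀ s, s < M s) : Monotone (mp M r₀) :=
  monotone_nat_of_le_succ fun n => (mp_lt_mseq hM n).le

lemma r0_le_mp (hM : ∀ s, s < M s) (n : ℕ) : r₀ ≤ mp M r₀ n :=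
  mp_mono hM (Nat.zero_le n)

lemma mseq_le_mp (hM : ∀ s, s < M s) {i k : ℕ} (hik : i < k) :
    mseq M r₀ i ≤ mp M r₀ k := by
  cases k with
  | zero => omega
  | succ k => exact (mseq_strictMono hM).monotone (Nat.lt_succ_iff.1 hik)

def pairList (n : ℕ) : List (ℕ × ℕ) :=
  (List.range n).flatMap fun i => (List.range n).map fun j => (i, j)

lemma mem_pairList {n : ℕ} {p : ℕ × ℕ} : p ∈ pairList n ↔ p.1 < n ∧ p.2 < n := by
  cases p with
  | mk i j =>
    simp only [pairList, List.mem_flatMap, List.mem_map, List.mem_range, Prod.mk.injEq]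
    constructor
    · rintro ⟨a, ha, b, hb, rfl, rfl⟩; exact ⟨ha, hb⟩
    · rintro ⟨h1, h2⟩; exact ⟨i, h1, j, h2, rfl, rfl⟩

variable (x : ℕ → P) (mpf : ℕ → ℕ) (Yf : ℕ → ℕ → P → P) (Gf : ℕ → P → P)

def termList (n : ℕ) (h : ℕ → P) : List P :=
  (((pairList n).filter fun p => decide (p.1 < p.2)).map fun p => Yf p.1 (mpf n + 1) (h p.2))
    ++ (((pairList n).filter fun p => decide (p.1 ≤ p.2)).map
        fun p => Gf (mpf n + 1) (h p.1 ⊔ h p.2))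

def cHist : ℕ → ℕ → P
  | 0 => fun _ => x 0
  | n+1 => fun k =>
      if k = n then (termList mpf Yf Gf n (cHist n)).foldl (· ⊔ ·) (x n)
      else cHist n k

def cseq (n : ℕ) : P := (termList mpf Yf Gf n (cHist x mpf Yf Gf n)).foldl (· ⊔ ·) (x n)

lemma cHist_eq : ∀ {n k : ℕ}, k < n → cHist x mpf Yf Gf n k = cseq x mpf Yf Gf k := by
  intro n
  induction n with
  | zero => intro k hk; omega
  | succ n ih =>
    intro k hk
    by_cases h : k = n
    · subst h; simp [cHist, cseq]
    · have : k < n := by omega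
      simp only [cHist, if_neg h]
      exact ih this

lemma x_le_cseq (n : ℕ) : x n ≤ cseq x mpf Yf Gf n := le_foldl_sup _ _

lemma cseq_foldl (n : ℕ) :
    cseq x mpf Yf Gf n
      = (termList mpf Yf Gf n (cHist x mpf Yf Gf n)).foldl (· ⊔ ·) (x n) := rfl

lemma Yterm_le {i k n : ℕ} (hik : i < k) (hkn : k < n) :
    Yf i (mpf n + 1) (cseq x mpf Yf Gf k) ≤ cseq x mpf Yf Gf n := by
  have hmem : Yf i (mpf n + 1) (cHist x mpf Yf Gf n k)
      ∈ termList mpf Yf Gf n (cHist x mpf Yf Gf n) := by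
    apply List.mem_append_left
    exact List.mem_map.2 ⟨(i, k),
      List.mem_filter.2 ⟨mem_pairList.2 ⟨lt_trans hik hkn, hkn⟩, by simpa using hik⟩, rfl⟩
  have := mem_le_foldl_sup hmem (x n)
  rwa [cHist_eq x mpf Yf Gf hkn] at this

lemma Gterm_le {i j n : ℕ} (hij : i ≤ j) (hjn : j < n) :
    Gf (mpf n + 1) (cseq x mpf Yf Gf i ⊔ cseq x mpf Yf Gf j) ≤ cseq x mpf Yf Gf n := by
  have hmem : Gf (mpf n + 1) (cHist x mpf Yf Gf n i ⊔ cHist x mpf Yf Gf n j)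
      ∈ termList mpf Yf Gf n (cHist x mpf Yf Gf n) := by
    apply List.mem_append_right
    exact List.mem_map.2 ⟨(i, j),
      List.mem_filter.2 ⟨mem_pairList.2 ⟨lt_of_le_of_lt hij hjn, hjn⟩, by simpa using hij⟩, rfl⟩
  have := mem_le_foldl_sup hmem (x n)
  rwa [cHist_eq x mpf Yf Gf (lt_of_le_of_lt hij hjn), cHist_eq x mpf Yf Gf hjn] at this

lemma termList_mem_cases {n : ℕ} {b : P}
    (hb : b ∈ termList mpf Yf Gf n (cHist x mpf Yf Gf n)) :
    (∃ i k, i < k ∧ k < n ∧ b = Yf i (mpf n + 1) (cseq x mpf Yf Gf k)) ∨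
    (∃ i j, i ≤ j ∧ j < n ∧ b = Gf (mpf n + 1) (cseq x mpf Yf Gf i ⊔ cseq x mpf Yf Gf j)) := by
  rcases List.mem_append.1 hb with h | h
  · obtain ⟨p, hp, rfl⟩ := List.mem_map.1 h
    obtain ⟨hp1, hp2⟩ := List.mem_filter.1 hp
    have h1 := mem_pairList.1 hp1
    have h2 : p.1 < p.2 := by simpa using hp2
    exact Or.inl ⟨p.1, p.2, h2, h1.2, by rw [cHist_eq x mpf Yf Gf h1.2]⟩
  · obtain ⟨p, hp, rfl⟩ := List.mem_map.1 h
    obtain ⟨hp1, hp2⟩ := List.mem_filter.1 hp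
    have h1 := mem_pairList.1 hp1
    have h2 : p.1 ≤ p.2 := by simpa using hp2
    exact Or.inr ⟨p.1, p.2, h2, h1.2,
      by rw [cHist_eq x mpf Yf Gf (lt_of_le_of_lt h2 h1.2), cHist_eq x mpf Yf Gf h1.2]⟩

/-- The core construction: given the skolemized witnesses of non-separation and the
"case II" hypothesis, build a join-embedding of `Ω(ω*)`. -/
lemma main_construction (I : ℕ → Set P)
    (hdown : ∀ n, ∀ u v : P, u ≤ v → v ∈ I n → u ∈ I n)
    (hjoin : ∀ n, ∀ u ∈ I n, ∀ v ∈ I n, u ⊔ v ∈ I n)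
    (hmono : ∀ a b : ℕ, a ≤ b → I b ⊆ I a)
    (pv mq : ℕ → ℕ)
    (hpv_mono : Monotone pv)
    (hmq_le_pv : ∀ {i k : ℕ}, i < k → mq i ≤ pv k)
    (r₀ : ℕ) (hr0_le : ∀ n, r₀ ≤ pv n)
    (hr₀ : ∀ u ∈ I r₀, (∃ l, ∀ z ∈ I l, z ≤ u) → ∀ t, u ∈ I t)
    (x : ℕ → P) (Yf : ℕ → ℕ → P → P) (Gf : ℕ → P → P)
    (hx1 : ∀ n, x n ∈ I (pv n + 1))
    (hx2 : ∀ n, x n ∉ I (mq n))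
    (hx3 : ∀ n k, pv n < k → ∀ z ∈ I (mq n), ∃ y ∈ I k, z ≤ x n ⊔ y)
    (hYmem : ∀ i l z, (∃ y ∈ I l, z ≤ x i ⊔ y) → Yf i l z ∈ I l)
    (hYle : ∀ i l z, (∃ y ∈ I l, z ≤ x i ⊔ y) → z ≤ x i ⊔ Yf i l z)
    (hGmem : ∀ l u, (∃ g ∈ I l, ¬ g ≤ u) → Gf l u ∈ I l)
    (hGnle : ∀ l u, (∃ g ∈ I l, ¬ g ≤ u) → ¬ Gf l u ≤ u) :
    ∃ f : OmegaStar → P, Function.Injective f ∧ ∀ a b, f (omegaJoin a b) = f a ⊔ f b := by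
  have hxc : ∀ n, x n ≤ cseq x pv Yf Gf n := fun n => x_le_cseq x pv Yf Gf n
  have hcm : ∀ n, cseq x pv Yf Gf n ∉ I (mq n) :=
    fun n h => hx2 n (hdown _ _ _ (hxc n) h)
  have hdepth : ∀ n, cseq x pv Yf Gf n ∈ I (pv n + 1) := by
    intro n
    induction n using Nat.strong_induction_on with
    | _ n ih =>
      rw [cseq_foldl]
      apply foldl_sup_mem (fun u hu v hv => hjoin _ u hu v hv) (hx1 n)
      intro b hb
      rcases termList_mem_cases x pv Yf Gf hb with ⟨i, k, hik, hkn, rfl⟩ | ⟨i, j, hij, hjn, rfl⟩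
      · apply hYmem
        apply hx3 i (pv n + 1)
          (lt_of_le_of_lt (hpv_mono (le_of_lt (lt_trans hik hkn))) (Nat.lt_succ_self _))
        exact hmono _ _ (le_trans (hmq_le_pv hik) (Nat.le_succ _)) (ih k hkn)
      · apply hGmem
        by_contra hno
        push_neg at hno
        have hiu : cseq x pv Yf Gf i ∈ I r₀ :=
          hmono r₀ _ (le_trans (hr0_le i) (Nat.le_succ _)) (ih i (lt_of_le_of_lt hij hjn))
        have hju : cseq x pv Yf Gf j ∈ I r₀ :=
          hmono r₀ _ (le_trans (hr0_le j) (Nat.le_succ _)) (ih j hjn)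
        have hall := hr₀ _ (hjoin r₀ _ hiu _ hju) ⟨pv n + 1, hno⟩ (mq i)
        exact hcm i (hdown _ _ _ le_sup_left hall)
  have hYpre : ∀ i k n, i < k → k < n →
      ∃ y ∈ I (pv n + 1), cseq x pv Yf Gf k ≤ x i ⊔ y := by
    intro i k n hik hkn
    apply hx3 i (pv n + 1)
      (lt_of_le_of_lt (hpv_mono (le_of_lt (lt_trans hik hkn))) (Nat.lt_succ_self _))
    exact hmono _ _ (le_trans (hmq_le_pv hik) (Nat.le_succ _)) (hdepth k)
  have hGpre : ∀ i j n, i ≤ j → j < n →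
      ∃ g ∈ I (pv n + 1), ¬ g ≤ cseq x pv Yf Gf i ⊔ cseq x pv Yf Gf j := by
    intro i j n hij hjn
    by_contra hno
    push_neg at hno
    have hiu : cseq x pv Yf Gf i ∈ I r₀ :=
      hmono r₀ _ (le_trans (hr0_le i) (Nat.le_succ _)) (hdepth i)
    have hju : cseq x pv Yf Gf j ∈ I r₀ :=
      hmono r₀ _ (le_trans (hr0_le j) (Nat.le_succ _)) (hdepth j)
    have hall := hr₀ _ (hjoin r₀ _ hiu _ hju) ⟨pv n + 1, hno⟩ (mq i)
    exact hcm i (hdown _ _ _ le_sup_left hall)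
  have hconv : ∀ i k j, i < k → k < j →
      cseq x pv Yf Gf k ≤ cseq x pv Yf Gf i ⊔ cseq x pv Yf Gf j := by
    intro i k j hik hkj
    have h1 := hYle i (pv j + 1) _ (hYpre i k j hik hkj)
    have h2 := Yterm_le x pv Yf Gf hik hkj
    exact le_trans h1 (sup_le_sup (hxc i) h2)
  have hP1 : ∀ i j k, i ≤ j → j < k →
      ¬ cseq x pv Yf Gf k ≤ cseq x pv Yf Gf i ⊔ cseq x pv Yf Gf j := by
    intro i j k hij hjk hle
    exact hGnle _ _ (hGpre i j k hij hjk) (le_trans (Gterm_le x pv Yf Gf hij hjk) hle)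
  have hP2 : ∀ k i j, k < i → i ≤ j →
      ¬ cseq x pv Yf Gf k ≤ cseq x pv Yf Gf i ⊔ cseq x pv Yf Gf j := by
    intro k i j hki hij hle
    have hci : cseq x pv Yf Gf i ∈ I (mq k) :=
      hmono _ _ (le_trans (hmq_le_pv hki) (Nat.le_succ _)) (hdepth i)
    have hcj : cseq x pv Yf Gf j ∈ I (mq k) :=
      hmono _ _ (le_trans (hmq_le_pv (lt_of_lt_of_le hki hij)) (Nat.le_succ _)) (hdepth j)
    exact hcm k (hdown _ _ _ hle (hjoin _ _ hci _ hcj))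
  refine ⟨fun a => cseq x pv Yf Gf a.1.1 ⊔ cseq x pv Yf Gf (a.1.2 - 1), ?_, ?_⟩
  · intro a b hab
    have ha := a.2
    have hb := b.2
    simp only at hab
    have e1 : a.1.1 = b.1.1 := by
      by_contra hne
      rcases Nat.lt_or_ge a.1.1 b.1.1 with h | h
      · exact hP2 a.1.1 b.1.1 (b.1.2 - 1) h (by omega) (le_sup_left.trans_eq hab)
      · have h' : b.1.1 < a.1.1 := by omega
        exact hP2 b.1.1 a.1.1 (a.1.2 - 1) h' (by omega) (le_sup_left.trans_eq hab.symm)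
    have e2 : a.1.2 = b.1.2 := by
      by_contra hne
      rcases Nat.lt_or_ge (a.1.2 - 1) (b.1.2 - 1) with h | h
      · exact hP1 a.1.1 (a.1.2 - 1) (b.1.2 - 1) (by omega) h (le_sup_right.trans_eq hab.symm)
      · rcases Nat.lt_or_ge (b.1.2 - 1) (a.1.2 - 1) with h2 | h2
        · exact hP1 b.1.1 (b.1.2 - 1) (a.1.2 - 1) (by omega) h2 (le_sup_right.trans_eq hab)
        · omega
    exact Subtype.ext (Prod.ext e1 e2)
  · intro a b
    have ha := a.2
    have hb := b.2
    have hconv' : ∀ p q r : ℕ, p ≤ q → q ≤ r →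
        cseq x pv Yf Gf q ≤ cseq x pv Yf Gf p ⊔ cseq x pv Yf Gf r := by
      intro p q r h1 h2
      rcases eq_or_lt_of_le h1 with rfl | h1'
      · exact le_sup_left
      · rcases eq_or_lt_of_le h2 with rfl | h2'
        · exact le_sup_right
        · exact hconv p q r h1' h2'
    show cseq x pv Yf Gf (min a.1.1 b.1.1) ⊔ cseq x pv Yf Gf (max a.1.2 b.1.2 - 1) = _
    apply le_antisymm
    · apply sup_le
      · rcases min_choice a.1.1 b.1.1 with h | h <;> rw [h]
        · exact le_sup_left.trans le_sup_left
        · exact le_sup_left.trans le_sup_right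
      · have hmx : max a.1.2 b.1.2 - 1 = max (a.1.2 - 1) (b.1.2 - 1) := by omega
        rw [hmx]
        rcases max_choice (a.1.2 - 1) (b.1.2 - 1) with h | h <;> rw [h]
        · exact le_sup_right.trans le_sup_left
        · exact le_sup_right.trans le_sup_right
    · apply sup_le <;> apply sup_le
      · exact hconv' _ _ _ (min_le_left _ _) (by omega)
      · exact hconv' _ _ _ (by omega) (by omega)
      · exact hconv' _ _ _ (min_le_right _ _) (by omega)
      · exact hconv' _ _ _ (by omega) (by omega)

end OmegaAux

namespace OmegaAux

variable {P : Type*} [SemilatticeSup P]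

/-- Forward direction, first case: a strictly decreasing sequence gives a non-separating
chain of principal ideals. -/
lemma forward_anti {g : ℕ → P} (hg : StrictAnti g) :
    ∃ I : ℕ → Set P, (∀ n, IsIdeal (I n)) ∧ (∀ n, I (n + 1) ⊂ I n) ∧
      ∀ A : Set ℕ, A.Infinite → ¬ Separating (I '' A) := by
  refine ⟨fun n => {z | z ≤ g n}, ?_, ?_, ?_⟩
  · intro n
    exact ⟨⟨g n, le_rfl⟩, fun u hu v hv => ⟨g n, le_rfl, hu, hv⟩,
      fun u v huv hv => le_trans huv hv⟩
  · intro n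
    rw [Set.ssubset_def]
    constructor
    · intro z hz; exact le_trans hz (hg (Nat.lt_succ_self n)).le
    · intro hsub
      exact (hg (Nat.lt_succ_self n)).not_ge (hsub (le_refl (g n)))
  · intro A hA hsep
    have hane : A.Nonempty := hA.nonempty
    have haA : sInf A ∈ A := Nat.sInf_mem hane
    obtain ⟨m, hmA, hma⟩ : ∃ m ∈ A, sInf A < m := by
      obtain ⟨m, hm⟩ := (hA.diff (Set.finite_singleton (sInf A))).nonempty
      exact ⟨m, hm.1, lt_of_le_of_ne (Nat.sInf_le hm.1) (Ne.symm (by simpa using hm.2))⟩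
    have hga_not : g (sInf A) ∉ {z : P | z ≤ g m} := (hg hma).not_ge
    have hga_mem : g (sInf A) ∈ ⋃₀ ((fun n => {z : P | z ≤ g n}) '' A) :=
      ⟨_, ⟨sInf A, haA, rfl⟩, le_rfl⟩
    have hne : {z : P | z ≤ g m} ≠ ⋃₀ ((fun n => {z : P | z ≤ g n}) '' A) := by
      intro h; rw [← h] at hga_mem; exact hga_not hga_mem
    obtain ⟨J, hJ, hnsub⟩ := hsep _ ⟨m, hmA, rfl⟩ hne (g (sInf A)) ⟨hga_mem, hga_not⟩
    obtain ⟨k, hkA, rfl⟩ := hJ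
    apply hnsub
    intro z hz
    exact ⟨g k, le_rfl, le_trans (le_trans hz (hg hma).le) le_sup_left⟩

/-- Forward direction, second case: an `Ω(ω*)` join-subsemilattice gives a non-separating
chain of ideals. -/
lemma forward_embed {f : OmegaStar → P} (hfinj : Function.Injective f)
    (hfjoin : ∀ a b, f (omegaJoin a b) = f a ⊔ f b) :
    ∃ I : ℕ → Set P, (∀ n, IsIdeal (I n)) ∧ (∀ n, I (n + 1) ⊂ I n) ∧
      ∀ A : Set ℕ, A.Infinite → ¬ Separating (I '' A) := by
  have horder : ∀ a b : OmegaStar, b.1.1 ≤ a.1.1 → a.1.2 ≤ b.1.2 → f a ≤ f b := by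
    intro a b h1 h2
    have hj : omegaJoin a b = b := Subtype.ext (Prod.ext (min_eq_right h1) (max_eq_right h2))
    calc f a ≤ f a ⊔ f b := le_sup_left
      _ = f (omegaJoin a b) := (hfjoin a b).symm
      _ = f b := by rw [hj]
  have hreflect : ∀ a b : OmegaStar, f a ≤ f b → b.1.1 ≤ a.1.1 ∧ a.1.2 ≤ b.1.2 := by
    intro a b h
    have hj : omegaJoin a b = b := hfinj (by rw [hfjoin]; exact sup_eq_right.2 h)
    have h1 : min a.1.1 b.1.1 = b.1.1 := congrArg (fun t : OmegaStar => t.1.1) hj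
    have h2 : max a.1.2 b.1.2 = b.1.2 := congrArg (fun t : OmegaStar => t.1.2) hj
    omega
  refine ⟨fun n => {z | ∃ a : OmegaStar, n ≤ a.1.1 ∧ z ≤ f a}, ?_, ?_, ?_⟩
  · intro n
    refine ⟨⟨f ⟨(n, n + 1), Nat.lt_succ_self n⟩,
      ⟨⟨(n, n + 1), Nat.lt_succ_self n⟩, le_rfl, le_rfl⟩⟩, ?_, ?_⟩
    · rintro u ⟨a, ha1, ha2⟩ v ⟨b, hb1, hb2⟩
      refine ⟨f (omegaJoin a b), ⟨omegaJoin a b, le_min ha1 hb1, le_rfl⟩, ?_, ?_⟩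
      · exact le_trans ha2 (by rw [hfjoin]; exact le_sup_left)
      · exact le_trans hb2 (by rw [hfjoin]; exact le_sup_right)
    · rintro u v huv ⟨a, ha1, ha2⟩; exact ⟨a, ha1, le_trans huv ha2⟩
  · intro n
    rw [Set.ssubset_def]
    constructor
    · rintro z ⟨a, ha1, ha2⟩; exact ⟨a, le_trans (Nat.le_succ n) ha1, ha2⟩
    · intro hsub
      obtain ⟨b, hb1, hb2⟩ :=
        hsub ⟨⟨(n, n + 1), Nat.lt_succ_self n⟩, le_rfl, le_rfl⟩
      have := (hreflect _ _ hb2).1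
      simp only at this hb1
      omega
  · intro A hA hsep
    have hane : A.Nonempty := hA.nonempty
    have haA : sInf A ∈ A := Nat.sInf_mem hane
    obtain ⟨m, hmA, hma⟩ : ∃ m ∈ A, sInf A < m := by
      obtain ⟨m, hm⟩ := (hA.diff (Set.finite_singleton (sInf A))).nonempty
      exact ⟨m, hm.1, lt_of_le_of_ne (Nat.sInf_le hm.1) (Ne.symm (by simpa using hm.2))⟩
    have hxx_not : f ⟨(sInf A, sInf A + 1), Nat.lt_succ_self _⟩
        ∉ {z : P | ∃ b : OmegaStar, m ≤ b.1.1 ∧ z ≤ f b} := by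
      rintro ⟨b, hb1, hb2⟩
      have := (hreflect _ _ hb2).1
      simp only at this
      omega
    have hxx_mem : f ⟨(sInf A, sInf A + 1), Nat.lt_succ_self _⟩
        ∈ ⋃₀ ((fun n => {z : P | ∃ b : OmegaStar, n ≤ b.1.1 ∧ z ≤ f b}) '' A) :=
      ⟨_, ⟨sInf A, haA, rfl⟩, ⟨_, le_rfl, le_rfl⟩⟩
    have hne : {z : P | ∃ b : OmegaStar, m ≤ b.1.1 ∧ z ≤ f b}
        ≠ ⋃₀ ((fun n => {z : P | ∃ b : OmegaStar, n ≤ b.1.1 ∧ z ≤ f b}) '' A) := by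
      intro h; rw [← h] at hxx_mem; exact hxx_not hxx_mem
    obtain ⟨J, hJ, hnsub⟩ := hsep _ ⟨m, hmA, rfl⟩ hne _ ⟨hxx_mem, hxx_not⟩
    obtain ⟨k, hkA, rfl⟩ := hJ
    apply hnsub
    rintro z ⟨b, hb1, hb2⟩
    refine ⟨f ⟨(k, max b.1.2 (k + 1)),
      lt_of_lt_of_le (Nat.lt_succ_self k) (le_max_right _ _)⟩,
      ⟨_, le_rfl, le_rfl⟩, ?_⟩
    rw [← hfjoin]
    refine le_trans hb2 (horder b _ ?_ ?_)
    · show min (sInf A) k ≤ b.1.1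
      have : sInf A ≤ b.1.1 := le_trans hma.le hb1
      omega
    · show b.1.2 ≤ max (sInf A + 1) (max b.1.2 (k + 1))
      exact le_trans (le_max_left _ _) (le_max_right _ _)

end OmegaAux

/-- A join-semilattice `P` contains a strictly decreasing infinite sequence or a
copy of `Ω(ω*)` as a join-subsemilattice iff there is a strictly decreasing `ω*`-sequence of
ideals of `P` all of whose infinite subchains are non-separating. -/
theorem omegaStar_or_Omega_iff_nonseparating_chain {P : Type*} [SemilatticeSup P] :
    ((∃ g : ℕ → P, StrictAnti g) ∨
        ∃ f : OmegaStar → P, Function.Injective f ∧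
          ∀ a b, f (omegaJoin a b) = f a ⊔ f b) ↔
      ∃ I : ℕ → Set P, (∀ n, IsIdeal (I n)) ∧ (∀ n, I (n + 1) ⊂ I n) ∧
        ∀ A : Set ℕ, A.Infinite → ¬ Separating (I '' A) := by
  constructor
  · rintro (⟨g, hg⟩ | ⟨f, hfinj, hfjoin⟩)
    · exact OmegaAux.forward_anti hg
    · exact OmegaAux.forward_embed hfinj hfjoin
  · rintro ⟨I, hId, hdec, hns⟩
    have hdown : ∀ n, ∀ u v : P, u ≤ v → v ∈ I n → u ∈ I n := fun n => (hId n).2.2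
    have hjoin : ∀ n, ∀ u ∈ I n, ∀ v ∈ I n, u ⊔ v ∈ I n := by
      intro n u hu v hv
      obtain ⟨z, hz, h1, h2⟩ := (hId n).2.1 u hu v hv
      exact hdown n _ z (sup_le h1 h2) hz
    have hsub : ∀ n, I (n + 1) ⊆ I n := fun n => (hdec n).subset
    have hmono : ∀ a b : ℕ, a ≤ b → I b ⊆ I a := by
      intro a b hab
      induction b, hab using Nat.le_induction with
      | base => exact subset_rfl
      | succ b hb ihb => exact (hsub b).trans ihb
    have hW : ∀ s : ℕ, ∃ m, s < m ∧ ∃ xx, xx ∈ I (s + 1) ∧ xx ∉ I m ∧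
        ∀ k, s < k → ∀ z ∈ I m, ∃ y ∈ I k, z ≤ xx ⊔ y := by
      intro s
      have h := hns (Set.Ioi s) (Set.Ioi_infinite s)
      rw [Separating] at h
      push_neg at h
      obtain ⟨I₀, hI₀, -, xx, hxx, hall⟩ := h
      obtain ⟨m, hmA, rfl⟩ := hI₀
      refine ⟨m, hmA, xx, ?_, hxx.2, ?_⟩
      · obtain ⟨-, ⟨k, hkA, rfl⟩, hxk⟩ := hxx.1
        exact hmono (s + 1) k hkA hxk
      · intro k hk z hz
        have h2 := hall (I k) ⟨k, hk, rfl⟩ hz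
        simpa [JoinUp] using h2
    choose M hM X hX1 hX2 hX3 using hW
    by_cases hC : ∃ r₀, ∀ u ∈ I r₀, (∃ l, ∀ z ∈ I l, z ≤ u) → ∀ t, u ∈ I t
    · obtain ⟨r₀, hr₀⟩ := hC
      right
      exact OmegaAux.main_construction I hdown hjoin hmono
        (OmegaAux.mp M r₀) (OmegaAux.mseq M r₀)
        (OmegaAux.mp_mono hM) (fun {i k} hik => OmegaAux.mseq_le_mp hM hik)
        r₀ (OmegaAux.r0_le_mp hM) hr₀
        (fun n => X (OmegaAux.mp M r₀ n))
        (fun i l z => OmegaAux.pickY I (X (OmegaAux.mp M r₀ i)) l z)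
        (fun l u => OmegaAux.pickG I l u)
        (fun n => hX1 _)
        (fun n => by rw [OmegaAux.mseq_eq]; exact hX2 _)
        (fun n k hk => by rw [OmegaAux.mseq_eq]; exact hX3 _ _ hk)
        (fun i l z h => OmegaAux.pickY_mem h)
        (fun i l z h => OmegaAux.pickY_le h)
        (fun l u h => OmegaAux.pickG_mem h)
        (fun l u h => OmegaAux.pickG_not_le h)
    · left
      push_neg at hC
      have hC' : ∀ r₀ : ℕ, ∃ p : P × ℕ × ℕ, p.1 ∈ I r₀ ∧
          (∀ z ∈ I p.2.1, z ≤ p.1) ∧ p.1 ∉ I p.2.2 := by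
        intro r₀
        obtain ⟨w, hw, ⟨lw, hlw⟩, ⟨tw, htw⟩⟩ := hC r₀
        exact ⟨⟨w, lw, tw⟩, hw, hlw, htw⟩
      choose p hp1 hp2 hp3 using hC'
      set u : ℕ → P := fun r => (p r).1 with hudef
      set l : ℕ → ℕ := fun r => (p r).2.1 with hldef
      set t : ℕ → ℕ := fun r => (p r).2.2 with htdef
      have hu : ∀ r, u r ∈ I r := hp1
      have hl : ∀ r, ∀ z ∈ I (l r), z ≤ u r := hp2
      have ht : ∀ r, u r ∉ I (t r) := hp3
      obtain ⟨R, hR0, hRsucc⟩ : ∃ R : ℕ → ℕ, R 0 = 0 ∧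
          ∀ n, R (n + 1) = max (l (R n)) (t (R n)) :=
        ⟨fun n => Nat.rec 0 (fun _ p => max (l p) (t p)) n, rfl, fun n => rfl⟩
      refine ⟨fun n => u (R n), strictAnti_nat_of_succ_lt fun n => ?_⟩
      have h1 : u (R (n + 1)) ∈ I (l (R n)) :=
        hmono _ _ (by rw [hRsucc]; exact le_max_left _ _) (hu _)
      have h2 : u (R (n + 1)) ∈ I (t (R n)) :=
        hmono _ _ (by rw [hRsucc]; exact le_max_right _ _) (hu _)
      exact lt_of_le_of_ne (hl _ _ h1) (fun h => ht (R n) (h ▸ h2))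
end

section
/- Let P be a join-semilattice. The following are equivalent: (i) there exists a poset Q and an embedding of P into I_{<ω}(Q) as a join-subsemilattice; (ii) P embeds into I_{<ω}(J(P)) as a join-subsemilattice, where J(P) is ordered by inclusion; (iii) P embeds into I_{<ω}(Δ(J(P))) as a join-subsemilattice, where Δ(J(P)) is ordered by inclusion; (iv) for every x ∈ P, the set {y ∈ P : x ≰ y} is a union of finitely many (possibly zero) ideals of P. -/
open Set

universe u

section Helpers

variable {P : Type*} [SemilatticeSup P]

lemma isIdeal_down (y : P) : IsIdeal {z : P | z ≤ y} :=
  ⟨⟨y, le_refl y⟩, fun a ha b hb => ⟨y, le_refl y, ha, hb⟩,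
    fun a b hab hb => le_trans hab hb⟩

lemma sup_mem_ideal_iff {I : Set P} (hI : IsIdeal I) {a b : P} :
    a ⊔ b ∈ I ↔ a ∈ I ∧ b ∈ I := by
  constructor
  · intro h
    exact ⟨hI.2.2 a _ le_sup_left h, hI.2.2 b _ le_sup_right h⟩
  · rintro ⟨ha, hb⟩
    obtain ⟨z, hz, haz, hbz⟩ := hI.2.1 a ha b hb
    exact hI.2.2 _ z (sup_le haz hbz) hz

lemma ideal_finset_bound {I : Set P} (hI : IsIdeal I) :
    ∀ F : Finset P, ↑F ⊆ I → ∃ z ∈ I, ∀ w ∈ F, w ≤ z := by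
  classical
  intro F
  induction F using Finset.induction with
  | empty =>
    intro _
    obtain ⟨z, hz⟩ := hI.1
    exact ⟨z, hz, by simp⟩
  | @insert a F ha ih =>
    intro h
    obtain ⟨z, hz, hzb⟩ := ih (fun w hw => h (Finset.mem_insert_of_mem hw))
    have haI : a ∈ I := h (Finset.mem_insert_self a F)
    obtain ⟨u, hu, hau, hzu⟩ := hI.2.1 a haI z hz
    refine ⟨u, hu, fun w hw => ?_⟩
    rcases Finset.mem_insert.1 hw with rfl | hw
    · exact hau
    · exact (hzb w hw).trans hzu

/-- A directed set contained in a finite union of downward closed sets is contained in one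
of them. -/
lemma ideal_subset_of_subset_finUnion {I : Set P} (hI : IsIdeal I) (G : Finset (Set P))
    (hG : ∀ J ∈ G, ∀ x y : P, x ≤ y → y ∈ J → x ∈ J) (h : I ⊆ ⋃₀ ↑G) :
    ∃ J ∈ G, I ⊆ J := by
  classical
  by_contra hc
  push_neg at hc
  have hc' : ∀ J : {J // J ∈ G}, ∃ x, x ∈ I ∧ x ∉ J.1 := by
    intro J
    obtain ⟨x, hx1, hx2⟩ := Set.not_subset.1 (hc J.1 J.2)
    exact ⟨x, hx1, hx2⟩
  choose xf hxI hxJ using hc'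
  obtain ⟨z, hzI, hzb⟩ := ideal_finset_bound hI (G.attach.image xf)
    (by
      intro w hw
      simp only [Finset.coe_image, Set.mem_image, Finset.mem_coe, Finset.mem_attach] at hw
      obtain ⟨J, _, rfl⟩ := hw
      exact hxI J)
  obtain ⟨J, hJG, hzJ⟩ := h hzI
  refine hxJ ⟨J, hJG⟩ ?_
  exact hG J hJG _ z (hzb _ (Finset.mem_image.2 ⟨⟨J, hJG⟩, Finset.mem_attach _ _, rfl⟩)) hzJ

/-- Every ideal avoiding `x` extends to a maximal ideal avoiding `x` (Zorn). -/
lemma exists_maximal_ideal_avoiding {I : Set P} (hI : IsIdeal I) {x : P} (hx : x ∉ I) :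
    ∃ M : Set P, IsIdeal M ∧ I ⊆ M ∧ x ∉ M ∧
      ∀ K : Set P, IsIdeal K → M ⊆ K → x ∉ K → K = M := by
  set S : Set (Set P) := {J | IsIdeal J ∧ x ∉ J} with hS
  have hzorn : ∀ c ⊆ S, IsChain (· ⊆ ·) c → c.Nonempty → ∃ ub ∈ S, ∀ s ∈ c, s ⊆ ub := by
    intro c hcS hchain ⟨J0, hJ0⟩
    refine ⟨⋃₀ c, ⟨⟨?_, ?_, ?_⟩, ?_⟩, fun s hs => Set.subset_sUnion_of_mem hs⟩
    · obtain ⟨z, hz⟩ := (hcS hJ0).1.1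
      exact ⟨z, J0, hJ0, hz⟩
    · rintro a ⟨J1, hJ1, haJ⟩ b ⟨J2, hJ2, hbJ⟩
      rcases hchain.total hJ1 hJ2 with h | h
      · obtain ⟨z, hz, h1, h2⟩ := (hcS hJ2).1.2.1 a (h haJ) b hbJ
        exact ⟨z, ⟨J2, hJ2, hz⟩, h1, h2⟩
      · obtain ⟨z, hz, h1, h2⟩ := (hcS hJ1).1.2.1 a haJ b (h hbJ)
        exact ⟨z, ⟨J1, hJ1, hz⟩, h1, h2⟩
    · rintro a b hab ⟨J1, hJ1, hbJ⟩
      exact ⟨J1, hJ1, (hcS hJ1).1.2.2 a b hab hbJ⟩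
    · rintro ⟨J1, hJ1, hxJ⟩
      exact (hcS hJ1).2 hxJ
  obtain ⟨M, hIM, hMmax⟩ := zorn_subset_nonempty S hzorn I ⟨hI, hx⟩
  exact ⟨M, hMmax.1.1, hIM, hMmax.1.2,
    fun K hK hMK hxK => (Set.Subset.antisymm (hMmax.2 ⟨hK, hxK⟩ hMK) hMK).symm ▸ rfl⟩

/-- A maximal ideal avoiding `x` is completely meet-irreducible. -/
lemma cmIdeal_of_maximal {M : Set P} {x : P} (hM : IsIdeal M) (hx : x ∉ M)
    (hmax : ∀ K : Set P, IsIdeal K → M ⊆ K → x ∉ K → K = M) : CMIdeal M := by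
  obtain ⟨y0, hy0⟩ := hM.1
  have hxJ : x ∈ JoinUp x M := ⟨y0, hy0, le_sup_left⟩
  have hMsub : M ⊆ JoinUp x M := fun y hy => ⟨y, hy, le_sup_right⟩
  have hJideal : IsIdeal (JoinUp x M) := by
    refine ⟨⟨x, hxJ⟩, ?_, ?_⟩
    · rintro a ⟨y, hy, hay⟩ b ⟨y', hy', hby⟩
      obtain ⟨y'', hy'', h1, h2⟩ := hM.2.1 y hy y' hy'
      refine ⟨x ⊔ y'', ⟨y'', hy'', le_refl _⟩, ?_, ?_⟩
      · exact hay.trans (sup_le_sup_left h1 x)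
      · exact hby.trans (sup_le_sup_left h2 x)
    · rintro a b hab ⟨y, hy, hby⟩
      exact ⟨y, hy, hab.trans hby⟩
  refine ⟨hM, JoinUp x M, hJideal, ⟨hMsub, fun h => hx (h hxJ)⟩, ?_⟩
  intro K hK hMK
  have hxK : x ∈ K := by
    by_contra hxK
    exact hMK.2 ((hmax K hK hMK.1 hxK) ▸ Set.Subset.rfl)
  rintro z ⟨y, hy, hz⟩
  obtain ⟨w, hw, h1, h2⟩ := hK.2.1 x hxK y (hMK.1 hy)
  exact hK.2.2 z w (hz.trans (sup_le h1 h2)) hw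

/-- Elements of `FinGenInit Q` are downward closed. -/
lemma finGenInit_downclosed {Q : Type*} [Preorder Q] {S : Set Q} (hS : S ∈ FinGenInit Q)
    {a b : Q} (hab : a ≤ b) (hb : b ∈ S) : a ∈ S := by
  obtain ⟨F, rfl⟩ := hS
  obtain ⟨y, hy, hby⟩ := hb
  exact ⟨y, hy, hab.trans hby⟩

end Helpers

/-- For a join-semilattice `P` the following are equivalent: (i) `P` embeds into
`I_{<ω}(Q)` as a join-subsemilattice for some poset `Q`; (ii) `P` embeds into `I_{<ω}(J(P))`;
(iii) `P` embeds into `I_{<ω}(Δ(J(P)))`; (iv) for every `x ∈ P`, `P \ ↑x` is a finite union of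
ideals. -/
theorem embeds_finGenInit_tfae {P : Type u} [SemilatticeSup P] :
    List.TFAE [
      ∃ (Q : Type u) (_ : PartialOrder Q), ∃ f : P → Set Q,
        (∀ p, f p ∈ FinGenInit Q) ∧ Function.Injective f ∧
          ∀ a b, f (a ⊔ b) = f a ∪ f b,
      ∃ f : P → Set {I : Set P // IsIdeal I},
        (∀ p, f p ∈ FinGenInit {I : Set P // IsIdeal I}) ∧ Function.Injective f ∧
          ∀ a b, f (a ⊔ b) = f a ∪ f b,
      ∃ f : P → Set {I : Set P // CMIdeal I},
        (∀ p, f p ∈ FinGenInit {I : Set P // CMIdeal I}) ∧ Function.Injective f ∧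
          ∀ a b, f (a ⊔ b) = f a ∪ f b,
      ∀ x : P, ∃ 𝓖 : Finset (Set P), (∀ I ∈ 𝓖, IsIdeal I) ∧
        {y : P | ¬ x ≤ y} = ⋃₀ ↑𝓖] := by
  classical
  tfae_have 1 → 4 := by
    rintro ⟨Q, _, f, hFG, hinj, hjoin⟩ x
    have hmono : ∀ a b : P, a ≤ b → f a ⊆ f b := by
      intro a b hab
      have h : f b = f a ∪ f b := by rw [← hjoin, sup_eq_right.mpr hab]
      rw [h]; exact Set.subset_union_left
    have hrefl : ∀ a b : P, f a ⊆ f b → a ≤ b := by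
      intro a b hab
      have h : f (a ⊔ b) = f b := by rw [hjoin, Set.union_eq_self_of_subset_left hab]
      exact sup_eq_right.mp (hinj h)
    obtain ⟨F, hF⟩ := hFG x
    refine ⟨(F.filter fun q => ∃ y : P, q ∉ f y).image fun q => {y : P | q ∉ f y}, ?_, ?_⟩
    · intro I hI
      obtain ⟨q, hq, rfl⟩ := Finset.mem_image.1 hI
      obtain ⟨hqF, y0, hy0⟩ := Finset.mem_filter.1 hq
      refine ⟨⟨y0, hy0⟩, ?_, ?_⟩
      · intro a ha b hb
        refine ⟨a ⊔ b, ?_, le_sup_left, le_sup_right⟩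
        rw [Set.mem_setOf_eq, hjoin]
        rintro (h | h)
        exacts [ha h, hb h]
      · intro a b hab hb
        exact fun h => hb (hmono a b hab h)
    · ext y
      simp only [Set.mem_setOf_eq, Set.mem_sUnion, Finset.coe_image, Set.mem_image,
        Finset.mem_coe, Finset.mem_filter]
      constructor
      · intro hxy
        have hns : ¬ f x ⊆ f y := fun h => hxy (hrefl x y h)
        obtain ⟨z, hzx, hzy⟩ := Set.not_subset.1 hns
        rw [hF] at hzx
        obtain ⟨q, hqF, hzq⟩ := hzx
        have hqy : q ∉ f y := fun h => hzy (finGenInit_downclosed (hFG y) hzq h)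
        exact ⟨{y' : P | q ∉ f y'}, ⟨q, ⟨hqF, y, hqy⟩, rfl⟩, hqy⟩
      · rintro ⟨I, ⟨q, ⟨hqF, _⟩, rfl⟩, hyI⟩
        intro hxy
        have hqx : q ∈ f x := by rw [hF]; exact ⟨q, hqF, le_refl q⟩
        exact hyI (hmono x y hxy hqx)
  tfae_have 4 → 2 := by
    intro h4
    refine ⟨fun p => {I : {I : Set P // IsIdeal I} | p ∉ I.1}, ?_, ?_, ?_⟩
    · intro p
      obtain ⟨𝓖, h𝓖, hEq⟩ := h4 p
      refine ⟨𝓖.attach.image (fun G => ⟨G.1, h𝓖 G.1 G.2⟩), ?_⟩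
      ext I
      simp only [Set.mem_setOf_eq, Finset.mem_image, Finset.mem_attach, true_and]
      constructor
      · intro hpI
        have hsub : I.1 ⊆ ⋃₀ ↑𝓖 := by
          rw [← hEq]
          intro y hy hpy
          exact hpI (I.2.2.2 p y hpy hy)
        obtain ⟨G, hG, hIG⟩ := ideal_subset_of_subset_finUnion I.2 𝓖
          (fun J hJ => (h𝓖 J hJ).2.2) hsub
        exact ⟨⟨G, h𝓖 G hG⟩, ⟨⟨G, hG⟩, rfl⟩, hIG⟩
      · rintro ⟨J, ⟨⟨G, hG⟩, rfl⟩, hIJ⟩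
        intro hpI
        have : p ∈ ⋃₀ ↑𝓖 := ⟨G, hG, hIJ hpI⟩
        rw [← hEq] at this
        exact this (le_refl p)
    · have key : ∀ a b : P,
          {I : {I : Set P // IsIdeal I} | a ∉ I.1} = {I | b ∉ I.1} → a ≤ b := by
        intro a b h
        by_contra hle
        have hmem : (⟨{z | z ≤ b}, isIdeal_down b⟩ : {I : Set P // IsIdeal I}) ∈
            {I : {I : Set P // IsIdeal I} | a ∉ I.1} := hle
        rw [h] at hmem
        exact hmem (le_refl b)
      intro a b hab
      exact le_antisymm (key a b hab) (key b a hab.symm)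
    · intro a b
      ext I
      simp only [Set.mem_setOf_eq, Set.mem_union, sup_mem_ideal_iff I.2]
      tauto
  tfae_have 4 → 3 := by
    intro h4
    refine ⟨fun p => {I : {I : Set P // CMIdeal I} | p ∉ I.1}, ?_, ?_, ?_⟩
    · intro p
      obtain ⟨𝓖, h𝓖, hEq⟩ := h4 p
      have hGavoid : ∀ G ∈ 𝓖, p ∉ G := by
        intro G hG hp
        have : p ∈ ⋃₀ ↑𝓖 := ⟨G, hG, hp⟩
        rw [← hEq] at this
        exact this (le_refl p)
      choose M hMideal hMsub hMavoid hMmax using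
        fun (G : {G // G ∈ 𝓖}) => exists_maximal_ideal_avoiding (h𝓖 G.1 G.2) (hGavoid G.1 G.2)
      refine ⟨𝓖.attach.image
        (fun G => ⟨M G, cmIdeal_of_maximal (hMideal G) (hMavoid G) (hMmax G)⟩), ?_⟩
      ext I
      simp only [Set.mem_setOf_eq, Finset.mem_image, Finset.mem_attach, true_and]
      constructor
      · intro hpI
        have hsub : I.1 ⊆ ⋃₀ ↑(𝓖.attach.image M) := by
          intro y hy
          have hy' : y ∈ ⋃₀ ↑𝓖 := by
            rw [← hEq]
            intro hpy
            exact hpI (I.2.1.2.2 p y hpy hy)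
          obtain ⟨G, hG, hyG⟩ := hy'
          refine ⟨M ⟨G, hG⟩, ?_, hMsub ⟨G, hG⟩ hyG⟩
          exact Finset.mem_coe.2 (Finset.mem_image.2 ⟨⟨G, hG⟩, Finset.mem_attach _ _, rfl⟩)
        obtain ⟨J, hJ, hIJ⟩ := ideal_subset_of_subset_finUnion I.2.1 (𝓖.attach.image M)
          (by
            intro J hJ
            obtain ⟨G, _, rfl⟩ := Finset.mem_image.1 hJ
            exact (hMideal G).2.2) hsub
        obtain ⟨G, _, rfl⟩ := Finset.mem_image.1 hJ
        exact ⟨⟨M G, cmIdeal_of_maximal (hMideal G) (hMavoid G) (hMmax G)⟩, ⟨G, rfl⟩, hIJ⟩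
      · rintro ⟨J, ⟨G, rfl⟩, hIJ⟩
        exact fun hpI => hMavoid G (hIJ hpI)
    · have key : ∀ a b : P,
          {I : {I : Set P // CMIdeal I} | a ∉ I.1} = {I | b ∉ I.1} → a ≤ b := by
        intro a b h
        by_contra hle
        obtain ⟨M', hM'ideal, hM'sub, hM'avoid, hM'max⟩ :=
          exists_maximal_ideal_avoiding (isIdeal_down b) (show a ∉ {z : P | z ≤ b} from hle)
        have hmem : (⟨M', cmIdeal_of_maximal hM'ideal hM'avoid hM'max⟩ :
            {I : Set P // CMIdeal I}) ∈ {I : {I : Set P // CMIdeal I} | a ∉ I.1} := hM'avoid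
        rw [h] at hmem
        exact hmem (hM'sub (le_refl b))
      intro a b hab
      exact le_antisymm (key a b hab) (key b a hab.symm)
    · intro a b
      ext I
      simp only [Set.mem_setOf_eq, Set.mem_union, sup_mem_ideal_iff I.2.1]
      tauto
  tfae_have 2 → 1 := by
    rintro ⟨f, h1, h2, h3⟩
    exact ⟨{I : Set P // IsIdeal I}, inferInstance, f, h1, h2, h3⟩
  tfae_have 3 → 1 := by
    rintro ⟨f, h1, h2, h3⟩
    exact ⟨{I : Set P // CMIdeal I}, inferInstance, f, h1, h2, h3⟩
  tfae_finish
end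

section
/- If a join-semilattice P has no infinite antichain, then P embeds into I_{<ω}(J(P)) as a join-subsemilattice, where J(P) is ordered by inclusion. -/
open Set

section Aux

variable {P : Type*} [SemilatticeSup P]

lemma ideal_sup_mem {I : Set P} (hI : IsIdeal I) {a b : P} (ha : a ∈ I) (hb : b ∈ I) :
    a ⊔ b ∈ I := by
  obtain ⟨-, hdir, hdown⟩ := hI
  obtain ⟨z, hz, haz, hbz⟩ := hdir a ha b hb
  exact hdown _ z (sup_le haz hbz) hz

/-- A maximal ideal avoiding `p`. -/
def MaxAvoid (p : P) (I : Set P) : Prop :=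
  IsIdeal I ∧ p ∉ I ∧ ∀ J : Set P, IsIdeal J → p ∉ J → I ⊆ J → J = I

lemma exists_maxAvoid {p : P} {I : Set P} (hI : IsIdeal I) (hp : p ∉ I) :
    ∃ M, I ⊆ M ∧ MaxAvoid p M := by
  have hch : ∀ c ⊆ {J : Set P | IsIdeal J ∧ p ∉ J}, IsChain (· ⊆ ·) c → c.Nonempty →
      ∃ ub ∈ {J : Set P | IsIdeal J ∧ p ∉ J}, ∀ s ∈ c, s ⊆ ub := by
    intro c hcS hc hcne
    refine ⟨⋃₀ c, ⟨⟨?_, ?_, ?_⟩, ?_⟩, fun s hs => subset_sUnion_of_mem hs⟩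
    · obtain ⟨J, hJ⟩ := hcne
      obtain ⟨x, hx⟩ := (hcS hJ).1.1
      exact ⟨x, J, hJ, hx⟩
    · rintro x ⟨J1, hJ1, hx⟩ y ⟨J2, hJ2, hy⟩
      rcases eq_or_ne J1 J2 with rfl | hne
      · obtain ⟨z, hz, h1, h2⟩ := (hcS hJ1).1.2.1 x hx y hy
        exact ⟨z, ⟨J1, hJ1, hz⟩, h1, h2⟩
      · rcases hc hJ1 hJ2 hne with h | h
        · obtain ⟨z, hz, h1, h2⟩ := (hcS hJ2).1.2.1 x (h hx) y hy
          exact ⟨z, ⟨J2, hJ2, hz⟩, h1, h2⟩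
        · obtain ⟨z, hz, h1, h2⟩ := (hcS hJ1).1.2.1 x hx y (h hy)
          exact ⟨z, ⟨J1, hJ1, hz⟩, h1, h2⟩
    · rintro x y hxy ⟨J, hJ, hy⟩
      exact ⟨J, hJ, (hcS hJ).1.2.2 x y hxy hy⟩
    · rintro ⟨J, hJ, hp'⟩
      exact (hcS hJ).2 hp'
  obtain ⟨M, hIM, hM⟩ := zorn_subset_nonempty {J : Set P | IsIdeal J ∧ p ∉ J} hch I ⟨hI, hp⟩
  refine ⟨M, hIM, hM.1.1, hM.1.2, fun J hJ hpJ hMJ => ?_⟩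
  exact subset_antisymm (hM.2 ⟨hJ, hpJ⟩ hMJ) hMJ

lemma maxAvoid_joinup {p : P} {J : Set P} (hJ : MaxAvoid p J) {x : P} (hx : x ∉ J) :
    ∃ v ∈ J, p ≤ x ⊔ v := by
  by_contra h
  push_neg at h
  set K := {z : P | ∃ v ∈ J, z ≤ x ⊔ v} with hK
  obtain ⟨v0, hv0⟩ := hJ.1.1
  have hKI : IsIdeal K := by
    refine ⟨⟨x, v0, hv0, le_sup_left⟩, ?_, ?_⟩
    · rintro z1 ⟨w1, hw1, h1⟩ z2 ⟨w2, hw2, h2⟩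
      refine ⟨x ⊔ (w1 ⊔ w2), ⟨w1 ⊔ w2, ideal_sup_mem hJ.1 hw1 hw2, le_rfl⟩, ?_, ?_⟩
      · exact h1.trans (sup_le_sup_left le_sup_left x)
      · exact h2.trans (sup_le_sup_left le_sup_right x)
    · rintro z1 z2 hz ⟨w, hw, h2⟩
      exact ⟨w, hw, hz.trans h2⟩
  have hpK : p ∉ K := by
    rintro ⟨v, hv, hpv⟩
    exact h v hv hpv
  have hJK : J ⊆ K := fun z hz => ⟨z, hz, le_sup_right⟩
  have hKJ : K = J := hJ.2.2 K hKI hpK hJK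
  exact hx (hKJ ▸ (⟨v0, hv0, le_sup_left⟩ : x ∈ K))

lemma exists_dominator {p : P} {J : Set P} (hJ : MaxAvoid p J) (xs : Finset P)
    (hx : ∀ x ∈ xs, x ∉ J) : ∃ w ∈ J, ∀ x ∈ xs, p ≤ x ⊔ w := by
  classical
  induction xs using Finset.induction_on with
  | empty =>
    obtain ⟨w, hw⟩ := hJ.1.1
    exact ⟨w, hw, by simp⟩
  | @insert a s ha ih =>
    obtain ⟨w, hwJ, hw⟩ := ih (fun x hxs => hx x (Finset.mem_insert_of_mem hxs))
    obtain ⟨v, hvJ, hv⟩ := maxAvoid_joinup hJ (hx a (Finset.mem_insert_self a s))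
    refine ⟨w ⊔ v, ideal_sup_mem hJ.1 hwJ hvJ, ?_⟩
    intro x hxs
    rcases Finset.mem_insert.mp hxs with rfl | hxs
    · exact hv.trans (sup_le_sup_left le_sup_right x)
    · exact (hw x hxs).trans (sup_le_sup_left le_sup_left x)

lemma step_lemma {p : P} {𝓝 : Set (Set P)} (h𝓝 : ∀ J ∈ 𝓝, MaxAvoid p J) (hinf : 𝓝.Infinite)
    (xs : Finset P) (hout : ∀ x ∈ xs, ∀ J ∈ 𝓝, x ∉ J) :
    ∃ y, (∃ J ∈ 𝓝, y ∈ J) ∧ (∀ x ∈ xs, p ≤ x ⊔ y) ∧ {J ∈ 𝓝 | y ∉ J}.Infinite := by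
  classical
  by_cases hcase : ∃ J ∈ 𝓝, ∃ y ∈ J, (∀ x ∈ xs, p ≤ x ⊔ y) ∧ {J' ∈ 𝓝 | y ∉ J'}.Infinite
  · obtain ⟨J, hJ, y, hyJ, h1, h2⟩ := hcase
    exact ⟨y, ⟨J, hJ, hyJ⟩, h1, h2⟩
  · exfalso
    push_neg at hcase
    have hfin : ∀ J ∈ 𝓝, ∀ y ∈ J, (∀ x ∈ xs, p ≤ x ⊔ y) → {J' ∈ 𝓝 | y ∉ J'}.Finite := by
      intro J hJ y hy hdom
      by_contra hf
      exact hf (hcase J hJ y hy hdom)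
    -- the ideal of elements belonging to cofinitely many members of 𝓝
    set I : Set P := {z : P | {J' ∈ 𝓝 | z ∉ J'}.Finite} with hIdef
    have hIdown : ∀ z w : P, z ≤ w → w ∈ I → z ∈ I := by
      intro z w hzw hw
      refine Set.Finite.subset hw ?_
      rintro J' ⟨hJ', hz⟩
      exact ⟨hJ', fun hwi => hz ((h𝓝 J' hJ').1.2.2 z w hzw hwi)⟩
    have hIsup : ∀ z w : P, z ∈ I → w ∈ I → z ⊔ w ∈ I := by
      intro z w hz hw
      refine Set.Finite.subset (hz.union hw) ?_
      rintro J' ⟨hJ', hs⟩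
      by_cases h1 : z ∈ J'
      · by_cases h2 : w ∈ J'
        · exact absurd (ideal_sup_mem (h𝓝 J' hJ').1 h1 h2) hs
        · exact Or.inr ⟨hJ', h2⟩
      · exact Or.inl ⟨hJ', h1⟩
    have hpI : p ∉ I := by
      intro hp
      refine hinf ?_
      refine Set.Finite.subset hp ?_
      intro J' hJ'
      exact ⟨hJ', (h𝓝 J' hJ').2.1⟩
    -- dominators
    have hdom : ∀ J ∈ 𝓝, ∃ w ∈ J, ∀ x ∈ xs, p ≤ x ⊔ w := fun J hJ =>
      exists_dominator (h𝓝 J hJ) xs (fun x hxx => hout x hxx J hJ)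
    -- every member of 𝓝 contains I
    have hsub : ∀ J ∈ 𝓝, I ⊆ J := by
      intro J hJ
      obtain ⟨w, hwJ, hw⟩ := hdom J hJ
      have hwI : w ∈ I := hfin J hJ w hwJ hw
      set K : Set P := {z : P | ∃ a ∈ I, ∃ b ∈ J, z ≤ a ⊔ b} with hKdef
      have hKI : IsIdeal K := by
        refine ⟨⟨w, w, hwI, w, hwJ, le_sup_left⟩, ?_, ?_⟩
        · rintro z1 ⟨a1, ha1, b1, hb1, h1⟩ z2 ⟨a2, ha2, b2, hb2, h2⟩
          refine ⟨(a1 ⊔ a2) ⊔ (b1 ⊔ b2),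
            ⟨a1 ⊔ a2, hIsup _ _ ha1 ha2, b1 ⊔ b2, ideal_sup_mem (h𝓝 J hJ).1 hb1 hb2, le_rfl⟩,
            ?_, ?_⟩
          · exact h1.trans (sup_le_sup le_sup_left le_sup_left)
          · exact h2.trans (sup_le_sup le_sup_right le_sup_right)
        · rintro z1 z2 hz ⟨a, ha, b, hb, h2⟩
          exact ⟨a, ha, b, hb, hz.trans h2⟩
      have hpK : p ∉ K := by
        rintro ⟨a, ha, b, hb, hpab⟩
        have hbw : b ⊔ w ∈ J := ideal_sup_mem (h𝓝 J hJ).1 hb hwJ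
        have hbwdom : ∀ x ∈ xs, p ≤ x ⊔ (b ⊔ w) := by
          intro x hxx
          exact (hw x hxx).trans (sup_le_sup_left le_sup_right x)
        have hbwI : b ⊔ w ∈ I := hfin J hJ (b ⊔ w) hbw hbwdom
        have : a ⊔ (b ⊔ w) ∈ I := hIsup _ _ ha hbwI
        have hple : p ≤ a ⊔ (b ⊔ w) :=
          hpab.trans (sup_le_sup_left le_sup_left a)
        exact hpI (hIdown p _ hple this)
      have hJK : J ⊆ K := fun z hz => ⟨w, hwI, z, hz, le_sup_right⟩
      have hKJ : K = J := (h𝓝 J hJ).2.2 K hKI hpK hJK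
      intro a ha
      obtain ⟨b0, hb0⟩ := (h𝓝 J hJ).1.1
      exact hKJ ▸ (⟨a, ha, b0, hb0, le_sup_left⟩ : a ∈ K)
    -- two distinct members of 𝓝 give a contradiction
    obtain ⟨J0, hJ0, J1, hJ1, hne⟩ := hinf.nontrivial
    have hnsub : ¬ J0 ⊆ J1 := by
      intro hss
      exact hne ((h𝓝 J0 hJ0).2.2 J1 (h𝓝 J1 hJ1).1 (h𝓝 J1 hJ1).2.1 hss).symm
    obtain ⟨c, hcJ0, hcJ1⟩ := Set.not_subset.mp hnsub
    obtain ⟨w, hwJ, hw⟩ := hdom J0 hJ0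
    have hcw : c ⊔ w ∈ J0 := ideal_sup_mem (h𝓝 J0 hJ0).1 hcJ0 hwJ
    have hcwdom : ∀ x ∈ xs, p ≤ x ⊔ (c ⊔ w) := by
      intro x hxx
      exact (hw x hxx).trans (sup_le_sup_left le_sup_right x)
    have hcwI : c ⊔ w ∈ I := hfin J0 hJ0 (c ⊔ w) hcw hcwdom
    have : c ⊔ w ∈ J1 := hsub J1 hJ1 hcwI
    exact hcJ1 ((h𝓝 J1 hJ1).1.2.2 c (c ⊔ w) le_sup_left this)

lemma maxAvoid_finite (hac : ∀ A : Set P, IsAntichain (· ≤ ·) A → A.Finite) (p : P) :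
    {I : Set P | MaxAvoid p I}.Finite := by
  classical
  by_contra hinf
  have hinf : {I : Set P | MaxAvoid p I}.Infinite := hinf
  set Inv : Set (Set P) × Finset P → Prop := fun s =>
    (∀ J ∈ s.1, MaxAvoid p J) ∧ s.1.Infinite ∧
    (∀ x ∈ s.2, ∀ J ∈ s.1, x ∉ J) ∧
    (∀ x ∈ s.2, ∀ y ∈ s.2, x ≠ y → p ≤ x ⊔ y) ∧ (∀ x ∈ s.2, ¬ p ≤ x) with hInv
  have hstep : ∀ s, Inv s → ∃ t, Inv t ∧ s.2 ⊆ t.2 ∧ t.2.card = s.2.card + 1 := by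
    rintro ⟨𝓝, xs⟩ ⟨h1, h2, h3, h4, h5⟩
    obtain ⟨y, ⟨J, hJ, hyJ⟩, hdom, hinf'⟩ := step_lemma h1 h2 xs h3
    have hpy : ¬ p ≤ y := fun hpy => (h1 J hJ).2.1 ((h1 J hJ).1.2.2 p y hpy hyJ)
    have hynot : y ∉ xs := fun hy => h3 y hy J hJ hyJ
    refine ⟨({J' ∈ 𝓝 | y ∉ J'}, insert y xs), ⟨?_, hinf', ?_, ?_, ?_⟩, ?_, ?_⟩
    · rintro J' ⟨hJ', -⟩
      exact h1 J' hJ'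
    · intro x hx J' hJ'
      rcases Finset.mem_insert.mp hx with rfl | hx
      · exact hJ'.2
      · exact h3 x hx J' hJ'.1
    · intro x hx z hz hxz
      rcases Finset.mem_insert.mp hx with rfl | hx'
      · rcases Finset.mem_insert.mp hz with rfl | hz'
        · exact absurd rfl hxz
        · exact sup_comm x z ▸ hdom z hz'
      · rcases Finset.mem_insert.mp hz with rfl | hz'
        · exact hdom x hx'
        · exact h4 x hx' z hz' hxz
    · intro x hx
      rcases Finset.mem_insert.mp hx with rfl | hx
      · exact hpy
      · exact h5 x hx
    · exact Finset.subset_insert _ _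
    · exact Finset.card_insert_of_notMem hynot
  have inv0 : Inv ({I : Set P | MaxAvoid p I}, (∅ : Finset P)) := by
    refine ⟨fun J hJ => hJ, hinf, ?_, ?_, ?_⟩ <;> simp
  let St := {s : Set (Set P) × Finset P // Inv s}
  let next : St → St := fun s => ⟨(hstep s.1 s.2).choose, (hstep s.1 s.2).choose_spec.1⟩
  let seq : ℕ → St := fun n => Nat.rec ⟨_, inv0⟩ (fun _ s => next s) n
  have hseq : ∀ n, seq (n + 1) = next (seq n) := fun n => rfl
  have hsub : ∀ n, (seq n).1.2 ⊆ (seq (n + 1)).1.2 := by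
    intro n
    rw [hseq]
    exact (hstep (seq n).1 (seq n).2).choose_spec.2.1
  have hcard : ∀ n, n ≤ (seq n).1.2.card := by
    intro n
    induction n with
    | zero => exact Nat.zero_le _
    | succ n ih =>
      have := (hstep (seq n).1 (seq n).2).choose_spec.2.2
      rw [hseq]
      show n + 1 ≤ (next (seq n)).1.2.card
      calc n + 1 ≤ (seq n).1.2.card + 1 := by omega
        _ = (next (seq n)).1.2.card := this.symm
  have hmono : ∀ m n, m ≤ n → (seq m).1.2 ⊆ (seq n).1.2 := by
    intro m n hmn
    induction n with
    | zero => simp_all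
    | succ n ih =>
      rcases Nat.lt_or_ge m (n + 1) with h | h
      · exact (ih (by omega)).trans (hsub n)
      · have : m = n + 1 := by omega
        subst this
        exact subset_rfl
  set A : Set P := {x | ∃ n, x ∈ (seq n).1.2} with hA
  have hanti : IsAntichain (· ≤ ·) A := by
    rintro x ⟨m, hm⟩ y ⟨n, hn⟩ hxy hle
    have hx' : x ∈ (seq (max m n)).1.2 := hmono m (max m n) (le_max_left _ _) hm
    have hy' : y ∈ (seq (max m n)).1.2 := hmono n (max m n) (le_max_right _ _) hn
    obtain ⟨-, -, -, h4, h5⟩ := (seq (max m n)).2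
    have hpxy : p ≤ x ⊔ y := h4 x hx' y hy' hxy
    rw [sup_eq_right.mpr hle] at hpxy
    exact h5 y hy' hpxy
  have hAfin : A.Finite := hac A hanti
  have hn : ∀ n : ℕ, n ≤ hAfin.toFinset.card := by
    intro n
    refine le_trans (hcard n) (Finset.card_le_card ?_)
    intro x hx
    exact hAfin.mem_toFinset.mpr ⟨n, hx⟩
  exact absurd (hn (hAfin.toFinset.card + 1)) (by omega)

lemma isIdeal_principal (a : P) : IsIdeal {x : P | x ≤ a} := by
  refine ⟨⟨a, le_rfl⟩, ?_, ?_⟩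
  · intro x hx y hy
    exact ⟨a, le_rfl, hx, hy⟩
  · intro x y hxy hy
    exact hxy.trans hy

end Aux

/-- If a join-semilattice `P` has no infinite antichain, then it embeds into
`I_{<ω}(J(P))` as a join-subsemilattice. -/
theorem no_infinite_antichain_embeds {P : Type*} [SemilatticeSup P]
    (hac : ∀ A : Set P, IsAntichain (· ≤ ·) A → A.Finite) :
    ∃ f : P → Set {I : Set P // IsIdeal I},
      (∀ p, f p ∈ FinGenInit {I : Set P // IsIdeal I}) ∧ Function.Injective f ∧
        ∀ a b, f (a ⊔ b) = f a ∪ f b := by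
  classical
  refine ⟨fun p => {I : {I : Set P // IsIdeal I} | p ∉ I.1}, ?_, ?_, ?_⟩
  · -- finitely generated
    intro p
    have hMfin : {I : Set P | MaxAvoid p I}.Finite := maxAvoid_finite hac p
    have hT : {I : {I : Set P // IsIdeal I} | MaxAvoid p I.1}.Finite := by
      have : {I : {I : Set P // IsIdeal I} | MaxAvoid p I.1} =
          Subtype.val ⁻¹' {I : Set P | MaxAvoid p I} := rfl
      rw [this]
      exact Set.Finite.preimage (Set.injOn_of_injective Subtype.val_injective) hMfin
    refine ⟨hT.toFinset, ?_⟩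
    ext x
    simp only [Set.mem_setOf_eq, Set.Finite.mem_toFinset]
    constructor
    · intro hx
      obtain ⟨M, hxM, hmax⟩ := exists_maxAvoid x.2 hx
      exact ⟨⟨M, hmax.1⟩, hmax, hxM⟩
    · rintro ⟨y, hy, hxy⟩
      intro hp
      exact hy.2.1 (hxy hp)
  · -- injective
    intro a b hab
    simp only [Set.ext_iff, Set.mem_setOf_eq, not_iff_not] at hab
    have h1 : b ∈ {x : P | x ≤ a} :=
      (hab ⟨{x : P | x ≤ a}, isIdeal_principal a⟩).mp le_rfl
    have h2 : a ∈ {x : P | x ≤ b} :=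
      (hab ⟨{x : P | x ≤ b}, isIdeal_principal b⟩).mpr le_rfl
    exact le_antisymm h2 h1
  · -- join preserving
    intro a b
    ext I
    simp only [Set.mem_setOf_eq, Set.mem_union]
    constructor
    · intro h
      by_contra hc
      push_neg at hc
      obtain ⟨ha, hb⟩ := hc
      exact h (ideal_sup_mem I.2 ha hb)
    · rintro (h | h) hs
      · exact h (I.2.2.2 a (a ⊔ b) le_sup_left hs)
      · exact h (I.2.2.2 b (a ⊔ b) le_sup_right hs)
end

section
/- Let Q be the set ℕ × {0,1} with the partial order in which (m,i) < (n,j) holds if and only if m > n (in the natural order on ℕ) and i < j. Then Q is well-founded, and there exists a subset P of I_{<ω}(Q) closed under binary union (a join-subsemilattice of I_{<ω}(Q)) such that Δ(J(P)), ordered by inclusion, is not well-founded: it contains a strictly decreasing infinite sequence of completely meet-irreducible ideals. -/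
open Set

/-- The set `ℕ × {0,1}`. -/
def QT : Type := ℕ × Bool

/-- The order on `ℕ × {0,1}` in which `(m,i) < (n,j)` iff `m > n` and `i < j`. -/
instance : PartialOrder QT where
  le a b := a = b ∨ ((b : ℕ × Bool).1 < (a : ℕ × Bool).1 ∧
    (a : ℕ × Bool).2 = false ∧ (b : ℕ × Bool).2 = true)
  le_refl a := Or.inl rfl
  le_trans a b c hab hbc := by
    rcases hab with rfl | hab
    · exact hbc
    · rcases hbc with rfl | hbc
      · exact Or.inr hab
      · exact Or.inr ⟨lt_trans hbc.1 hab.1, hab.2.1, hbc.2.2⟩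
  le_antisymm a b hab hba := by
    rcases hab with rfl | hab
    · rfl
    · rcases hba with rfl | hba
      · rfl
      · exact absurd (lt_trans hab.1 hba.1) (lt_irrefl _)

namespace BCaux

instance : DecidableEq QT := inferInstanceAs (DecidableEq (ℕ × Bool))

/-- The basic sets: trues with coordinate in `S`, falses with coordinate `≥ i`. -/
def Y (i : ℕ) (S : Finset ℕ) : Set QT :=
  {q | ((q : ℕ × Bool).2 = true ∧ (q : ℕ × Bool).1 ∈ S) ∨
       ((q : ℕ × Bool).2 = false ∧ i ≤ (q : ℕ × Bool).1)}

lemma true_mem_Y {i : ℕ} {S : Finset ℕ} {n : ℕ} (hn : n ∈ S) :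
    (((n, true) : ℕ × Bool) : QT) ∈ Y i S := Or.inl ⟨rfl, hn⟩

lemma false_mem_Y {i : ℕ} {S : Finset ℕ} {m : ℕ} (hm : i ≤ m) :
    (((m, false) : ℕ × Bool) : QT) ∈ Y i S := Or.inr ⟨rfl, hm⟩

lemma Y_subset_iff {i i' : ℕ} {S S' : Finset ℕ} :
    Y i S ⊆ Y i' S' ↔ (∀ n ∈ S, n ∈ S') ∧ i' ≤ i := by
  constructor
  · intro h
    refine ⟨fun n hn => ?_, ?_⟩
    · rcases h (true_mem_Y hn) with ⟨_, h2⟩ | ⟨h1, _⟩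
      · exact h2
      · simp at h1
    · rcases h (false_mem_Y (le_refl i)) with ⟨h1, _⟩ | ⟨_, h2⟩
      · simp at h1
      · exact h2
  · rintro ⟨hS, hi⟩ q hq
    rcases hq with ⟨h1, h2⟩ | ⟨h1, h2⟩
    · exact Or.inl ⟨h1, hS _ h2⟩
    · exact Or.inr ⟨h1, le_trans hi h2⟩

lemma Y_union (i i' : ℕ) (S S' : Finset ℕ) :
    Y i S ∪ Y i' S' = Y (min i i') (S ∪ S') := by
  ext q
  simp only [Set.mem_union, Y, Set.mem_setOf_eq, Finset.mem_union]
  constructor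
  · rintro ((⟨h1, h2⟩ | ⟨h1, h2⟩) | (⟨h1, h2⟩ | ⟨h1, h2⟩))
    · exact Or.inl ⟨h1, Or.inl h2⟩
    · exact Or.inr ⟨h1, le_trans (min_le_left _ _) h2⟩
    · exact Or.inl ⟨h1, Or.inr h2⟩
    · exact Or.inr ⟨h1, le_trans (min_le_right _ _) h2⟩
  · rintro (⟨h1, h2 | h2⟩ | ⟨h1, h2⟩)
    · exact Or.inl (Or.inl ⟨h1, h2⟩)
    · exact Or.inr (Or.inl ⟨h1, h2⟩)
    · rcases le_or_gt i (q : ℕ × Bool).1 with h | h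
      · exact Or.inl (Or.inr ⟨h1, h⟩)
      · exact Or.inr (Or.inr ⟨h1, by omega⟩)

lemma Y_mem_FinGenInit {i : ℕ} {S : Finset ℕ} (hS : S.Nonempty) (hiS : ∀ m ∈ S, i ≤ m) :
    Y i S ∈ FinGenInit QT := by
  refine ⟨S.image (fun n => (((n, true) : ℕ × Bool) : QT)) ∪
      (Finset.Icc i (S.min' hS)).image (fun m => (((m, false) : ℕ × Bool) : QT)), ?_⟩
  ext q
  simp only [Set.mem_setOf_eq, Finset.mem_union, Finset.mem_image, Finset.mem_Icc]
  constructor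
  · rintro (⟨h1, h2⟩ | ⟨h1, h2⟩)
    · exact ⟨q, Or.inl (Finset.mem_image.2 ⟨(q : ℕ × Bool).1, h2, Prod.ext_iff.2 ⟨rfl, h1.symm⟩⟩),
        le_refl q⟩
    · rcases le_or_gt (q : ℕ × Bool).1 (S.min' hS) with h | h
      · refine ⟨q, Or.inr (Finset.mem_image.2 ⟨(q : ℕ × Bool).1, Finset.mem_Icc.2 ⟨h2, h⟩, Prod.ext_iff.2 ⟨rfl, h1.symm⟩⟩),
          le_refl q⟩
      · exact ⟨(((S.min' hS, true) : ℕ × Bool) : QT),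
          Or.inl (Finset.mem_image.2 ⟨S.min' hS, S.min'_mem hS, rfl⟩), Or.inr ⟨h, h1, rfl⟩⟩
  · rintro ⟨y, hy | hy, hqy⟩
    · obtain ⟨n, hn, rfl⟩ := Finset.mem_image.1 hy
      rcases hqy with rfl | ⟨h1, h2, h3⟩
      · exact Or.inl ⟨rfl, hn⟩
      · exact Or.inr ⟨h2, le_trans (hiS n hn) (le_of_lt h1)⟩
    · obtain ⟨m, hm', rfl⟩ := Finset.mem_image.1 hy
      obtain ⟨him, hm⟩ := Finset.mem_Icc.1 hm'
      rcases hqy with rfl | ⟨h1, h2, h3⟩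
      · exact Or.inr ⟨rfl, him⟩
      · simp at h3

/-- The family of ideals: `Y i S` with `i ≥ a` and all elements of `S` at least `b`. -/
def Jfam (a b : ℕ) : Set (Set QT) :=
  {X | ∃ (i : ℕ) (S : Finset ℕ), S.Nonempty ∧ (∀ m ∈ S, i ≤ m) ∧ a ≤ i ∧
    (∀ m ∈ S, b ≤ m) ∧ X = Y i S}

lemma Jfam_mono {a a' b b' : ℕ} (ha : a ≤ a') (hb : b ≤ b') : Jfam a' b' ⊆ Jfam a b := by
  rintro X ⟨i, S, h1, h2, h3, h4, rfl⟩
  exact ⟨i, S, h1, h2, le_trans ha h3, fun m hm => le_trans hb (h4 m hm), rfl⟩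

lemma Y_not_mem_Jfam {i a b : ℕ} {S : Finset ℕ} (hi : i < a) : Y i S ∉ Jfam a b := by
  rintro ⟨i', S', -, -, ha, -, hEq⟩
  have hmem : (((i, false) : ℕ × Bool) : QT) ∈ Y i S := false_mem_Y le_rfl
  rw [hEq] at hmem
  rcases hmem with ⟨h1, -⟩ | ⟨-, h2⟩
  · simp at h1
  · omega

lemma Jfam_isIdeal {a b : ℕ} (hab : a ≤ b) : IsIdealIn (Jfam 0 0) (Jfam a b) := by
  refine ⟨?_, ?_, ?_, ?_⟩
  · rintro X ⟨i, S, h1, h2, -, -, rfl⟩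
    exact ⟨i, S, h1, h2, Nat.zero_le _, fun m _ => Nat.zero_le _, rfl⟩
  · exact ⟨Y b {b}, b, {b}, Finset.singleton_nonempty b, by simp, hab, by simp, rfl⟩
  · rintro X ⟨i, S, hS, hiS, hai, hbS, rfl⟩ X' ⟨i', S', hS', hiS', hai', hbS', rfl⟩
    obtain ⟨x, hx⟩ := hS
    refine ⟨Y (min i i') (S ∪ S'), ⟨min i i', S ∪ S', ⟨x, Finset.mem_union_left _ hx⟩, ?_,
      le_min hai hai', ?_, rfl⟩, ?_, ?_⟩
    · intro m hm
      rcases Finset.mem_union.1 hm with h | h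
      · exact le_trans (min_le_left _ _) (hiS m h)
      · exact le_trans (min_le_right _ _) (hiS' m h)
    · intro m hm
      rcases Finset.mem_union.1 hm with h | h
      · exact hbS m h
      · exact hbS' m h
    · exact Y_subset_iff.2 ⟨fun n hn => Finset.mem_union_left _ hn, min_le_left _ _⟩
    · exact Y_subset_iff.2 ⟨fun n hn => Finset.mem_union_right _ hn, min_le_right _ _⟩
  · rintro X ⟨i, S, hS, hiS, -, -, rfl⟩ X' ⟨i', S', hS', hiS', hai', hbS', rfl⟩ hle
    obtain ⟨hSS, hii⟩ := Y_subset_iff.1 hle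
    exact ⟨i, S, hS, hiS, le_trans hai' hii, fun m hm => hbS' m (hSS m hm), rfl⟩

lemma Jfam_ssubset (n : ℕ) : Jfam (n + 1) (n + 1) ⊂ Jfam n (n + 1) := by
  refine ssubset_iff_subset_not_subset.2 ⟨Jfam_mono (Nat.le_succ n) le_rfl, fun hcon => ?_⟩
  have hmem : Y n {n + 1} ∈ Jfam n (n + 1) :=
    ⟨n, {n + 1}, Finset.singleton_nonempty _, by simp, le_rfl, by simp, rfl⟩
  exact Y_not_mem_Jfam (Nat.lt_succ_self n) (hcon hmem)

lemma Jfam_cm (n : ℕ) : CMIdealIn (Jfam 0 0) (Jfam (n + 1) (n + 1)) := by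
  refine ⟨Jfam_isIdeal le_rfl, Jfam n (n + 1), Jfam_isIdeal (Nat.le_succ n), Jfam_ssubset n, ?_⟩
  intro K hK hss
  obtain ⟨hsub, hne⟩ := ssubset_iff_subset_not_subset.1 hss
  obtain ⟨X, hXK, hXI⟩ := Set.not_subset.1 hne
  obtain ⟨i, S, hS, hiS, -, -, rfl⟩ := hK.1 hXK
  have hin : i ≤ n := by
    by_contra h
    push_neg at h
    exact hXI ⟨i, S, hS, hiS, h, fun m hm => le_trans h (hiS m hm), rfl⟩
  rintro Z ⟨aZ, R, hR, haR, hna, hnR, rfl⟩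
  have h1 : Y (n + 1) R ∈ Jfam (n + 1) (n + 1) := ⟨n + 1, R, hR, hnR, le_rfl, hnR, rfl⟩
  have h2 : Y (n + 1) R ∈ K := hsub h1
  obtain ⟨W, hWK, hle1, hle2⟩ := hK.2.2.1 _ hXK _ h2
  obtain ⟨c, T, hT, hcT, -, -, rfl⟩ := hK.1 hWK
  obtain ⟨hST, hci⟩ := Y_subset_iff.1 hle1
  obtain ⟨hRT, -⟩ := Y_subset_iff.1 hle2
  refine hK.2.2.2 _ ⟨aZ, R, hR, haR, Nat.zero_le _, fun m _ => Nat.zero_le _, rfl⟩ _ hWK ?_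
  exact Y_subset_iff.2 ⟨hRT, by omega⟩


lemma lt_char (a b : QT) : a < b ↔ ((b : ℕ × Bool).1 < (a : ℕ × Bool).1 ∧
    (a : ℕ × Bool).2 = false ∧ (b : ℕ × Bool).2 = true) := by
  constructor
  · intro h
    obtain ⟨hab, hnba⟩ := lt_iff_le_not_ge.1 h
    rcases hab with rfl | h'
    · exact absurd (le_refl a) hnba
    · exact h'
  · rintro ⟨h1, h2, h3⟩
    refine lt_iff_le_not_ge.2 ⟨Or.inr ⟨h1, h2, h3⟩, ?_⟩
    rintro (rfl | ⟨h1', h2', h3'⟩)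
    · omega
    · omega

end BCaux

/-- The poset `Q = ℕ × {0,1}` (with `(m,i) < (n,j)` iff `m > n` and `i < j`) is
well-founded, and some join-subsemilattice `P` of `I_{<ω}(Q)` has a strictly decreasing
infinite sequence of completely meet-irreducible ideals, so `Δ(J(P))` is not well-founded. -/
theorem bipartite_counterexample :
    (∀ a b : QT, a < b ↔ ((b : ℕ × Bool).1 < (a : ℕ × Bool).1 ∧
        (a : ℕ × Bool).2 = false ∧ (b : ℕ × Bool).2 = true)) ∧
    WellFounded ((· < ·) : QT → QT → Prop) ∧
    ∃ P : Set (Set QT), P ⊆ FinGenInit QT ∧ (∀ X ∈ P, ∀ Y ∈ P, X ∪ Y ∈ P) ∧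
      ∃ I : ℕ → Set (Set QT), (∀ n, CMIdealIn P (I n)) ∧ ∀ n, I (n + 1) ⊂ I n := by
  constructor
  · exact fun a b => BCaux.lt_char a b
  constructor
  · constructor
    intro a
    constructor
    intro b hb
    constructor
    intro c hc
    have h1 := ((BCaux.lt_char b a).1 hb).2.1
    have h2 := ((BCaux.lt_char c b).1 hc).2.2
    rw [h1] at h2
    simp at h2
  refine ⟨BCaux.Jfam 0 0, ?_, ?_, fun n => BCaux.Jfam (n + 1) (n + 1),
    fun n => BCaux.Jfam_cm n, fun n => ?_⟩
  · rintro X ⟨i, S, hS, hiS, -, -, rfl⟩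
    exact BCaux.Y_mem_FinGenInit hS hiS
  · rintro X ⟨i, S, hS, hiS, -, -, rfl⟩ X' ⟨i', S', hS', hiS', -, -, rfl⟩
    rw [BCaux.Y_union]
    obtain ⟨x, hx⟩ := hS
    refine ⟨min i i', S ∪ S', ⟨x, Finset.mem_union_left _ hx⟩, ?_, Nat.zero_le _,
      fun m _ => Nat.zero_le _, rfl⟩
    intro m hm
    rcases Finset.mem_union.1 hm with h | h
    · exact le_trans (min_le_left _ _) (hiS m h)
    · exact le_trans (min_le_right _ _) (hiS' m h)
  · refine ssubset_iff_subset_not_subset.2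
      ⟨BCaux.Jfam_mono (Nat.le_succ _) (Nat.le_succ _), fun hcon => ?_⟩
    have hmem : BCaux.Y (n + 1) {n + 1} ∈ BCaux.Jfam (n + 1) (n + 1) :=
      ⟨n + 1, {n + 1}, Finset.singleton_nonempty _, by simp, le_rfl, by simp, rfl⟩
    exact BCaux.Y_not_mem_Jfam (Nat.lt_succ_self (n + 1)) (hcon hmem)
end

section
/- Let Q be a poset, let ℱ be a subset of I_{<ω}(Q), and let P := ℱ^{<ω} be ordered by inclusion. If I is a completely meet-irreducible ideal of P, then there exists x ∈ Q such that I = {F ∈ P : x ∉ F}. -/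
open Set

lemma mem_finUnions_downclosed {Q : Type*} [Preorder Q] {F : Set (Set Q)}
    (hF : F ⊆ FinGenInit Q) {H : Set Q} (hH : H ∈ finUnions F) :
    ∀ a b : Q, a ≤ b → b ∈ H → a ∈ H := by
  obtain ⟨G, hG, rfl⟩ := hH
  intro a b hab hb
  obtain ⟨S, hS, hbS⟩ := hb
  obtain ⟨E, hE⟩ := hF (hG hS)
  refine ⟨S, hS, ?_⟩
  rw [hE] at hbS ⊢
  obtain ⟨y, hy, hby⟩ := hbS
  exact ⟨y, hy, hab.trans hby⟩

lemma finUnions_union {α : Type*} {F : Set (Set α)} {A B : Set α}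
    (hA : A ∈ finUnions F) (hB : B ∈ finUnions F) : A ∪ B ∈ finUnions F := by
  classical
  obtain ⟨GA, hGA, rfl⟩ := hA
  obtain ⟨GB, hGB, rfl⟩ := hB
  refine ⟨GA ∪ GB, ?_, ?_⟩
  · rw [Finset.coe_union]; exact union_subset hGA hGB
  · rw [Finset.coe_union, sUnion_union]

lemma finUnions_fingen {Q : Type*} [Preorder Q] {F : Set (Set Q)}
    (hF : F ⊆ FinGenInit Q) {H : Set Q} (hH : H ∈ finUnions F) :
    ∃ E : Finset Q, H = {x | ∃ y ∈ E, x ≤ y} := by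
  classical
  obtain ⟨G, hG, rfl⟩ := hH
  induction G using Finset.induction_on with
  | empty => exact ⟨∅, by simp⟩
  | @insert S G hSG ih =>
    have hG' : ↑G ⊆ F := fun T hT => hG (by simp [hT])
    obtain ⟨E, hE⟩ := ih hG'
    obtain ⟨E', hE'⟩ := hF (hG (Finset.mem_coe.mpr (Finset.mem_insert_self S G)))
    refine ⟨E' ∪ E, ?_⟩
    rw [Finset.coe_insert, sUnion_insert, hE', hE]
    ext x
    simp only [mem_union, mem_setOf_eq, Finset.mem_union]
    constructor
    · rintro (⟨y, hy, hxy⟩ | ⟨y, hy, hxy⟩)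
      · exact ⟨y, Or.inl hy, hxy⟩
      · exact ⟨y, Or.inr hy, hxy⟩
    · rintro ⟨y, hy | hy, hxy⟩
      · exact Or.inl ⟨y, hy, hxy⟩
      · exact Or.inr ⟨y, hy, hxy⟩

lemma ideal_finset_mem {Q : Type*} [Preorder Q] {P I : Set (Set Q)}
    (hI : IsIdealIn P I) (E : Finset Q) (h : ∀ x ∈ E, ∃ F ∈ I, x ∈ F) :
    ∃ H ∈ I, ∀ x ∈ E, x ∈ H := by
  classical
  induction E using Finset.induction_on with
  | empty => exact ⟨hI.2.1.choose, hI.2.1.choose_spec, by simp⟩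
  | @insert a s _ ih =>
    obtain ⟨H, hH, hHs⟩ := ih (fun x hx => h x (Finset.mem_insert_of_mem hx))
    obtain ⟨F, hF, haF⟩ := h a (Finset.mem_insert_self a s)
    obtain ⟨Z, hZ, hHZ, hFZ⟩ := hI.2.2.1 H hH F hF
    refine ⟨Z, hZ, fun x hx => ?_⟩
    rcases Finset.mem_insert.mp hx with rfl | hx
    · exact hFZ haF
    · exact hHZ (hHs x hx)

/-- For `ℱ ⊆ I_{<ω}(Q)` and `P := ℱ^{<ω}`, every completely meet-irreducible
ideal of `P` is of the form `{F ∈ P : x ∉ F}` for some `x ∈ Q`. -/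
theorem cmIdeal_eq_not_mem {Q : Type*} [PartialOrder Q] (ℱ : Set (Set Q))
    (hℱ : ℱ ⊆ FinGenInit Q) (I : Set (Set Q)) (hI : CMIdealIn (finUnions ℱ) I) :
    ∃ x : Q, I = {F ∈ finUnions ℱ | x ∉ F} := by
  obtain ⟨⟨hIP, hIne, hIdir, hIdown⟩, J, hJid, hIJ, hmin⟩ := hI
  obtain ⟨G, hGJ, hGI⟩ := exists_of_ssubset hIJ
  have hGP : G ∈ finUnions ℱ := hJid.1 hGJ
  obtain ⟨E, hE⟩ := finUnions_fingen hℱ hGP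
  have key : ∃ x ∈ E, ∀ F ∈ I, x ∉ F := by
    by_contra hcon
    push_neg at hcon
    obtain ⟨H, hH, hHall⟩ :=
      ideal_finset_mem ⟨hIP, hIne, hIdir, hIdown⟩ E hcon
    have hGH : G ⊆ H := by
      intro a ha
      rw [hE] at ha
      obtain ⟨y, hy, hay⟩ := ha
      exact mem_finUnions_downclosed hℱ (hIP hH) a y hay (hHall y hy)
    exact hGI (hIdown G hGP H hH hGH)
  obtain ⟨x, hxE, hxI⟩ := key
  have hxG : x ∈ G := by rw [hE]; exact ⟨x, hxE, le_refl x⟩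
  refine ⟨x, ?_⟩
  ext F
  constructor
  · intro hF
    exact ⟨hIP hF, hxI F hF⟩
  · rintro ⟨hFP, hxF⟩
    by_contra hFnI
    set K : Set (Set Q) := {H | H ∈ finUnions ℱ ∧ ∃ F' ∈ I, H ⊆ F ∪ F'} with hKdef
    have hFK : F ∈ K := ⟨hFP, hIne.choose, hIne.choose_spec, subset_union_left⟩
    have hKid : IsIdealIn (finUnions ℱ) K := by
      refine ⟨fun H hH => hH.1, ⟨F, hFK⟩, ?_, ?_⟩
      · rintro H1 ⟨hH1P, F1, hF1, hs1⟩ H2 ⟨hH2P, F2, hF2, hs2⟩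
        obtain ⟨F3, hF3, h13, h23⟩ := hIdir F1 hF1 F2 hF2
        refine ⟨F ∪ F3, ⟨finUnions_union hFP (hIP hF3), F3, hF3, subset_refl _⟩, ?_, ?_⟩
        · exact hs1.trans (union_subset_union_right F h13)
        · exact hs2.trans (union_subset_union_right F h23)
      · rintro H1 hH1P H2 ⟨_, F2, hF2, hs2⟩ h12
        exact ⟨hH1P, F2, hF2, (Set.le_iff_subset.mp h12).trans hs2⟩
    have hIK : I ⊆ K := fun H hH =>
      ⟨hIP hH, H, hH, subset_union_right⟩
    have hIKs : I ⊂ K := (ssubset_iff_of_subset hIK).2 ⟨F, hFK, hFnI⟩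
    have hJK : J ⊆ K := hmin K hKid hIKs
    obtain ⟨_, F', hF'I, hGF⟩ := hJK hGJ
    rcases hGF hxG with hx | hx
    · exact hxF hx
    · exact hxI F' hF'I hx
end

section
/- Let Q be a poset in which the set {y ∈ Q : y ≤ q} is finite for every q ∈ Q, let ℱ be a subset of I_{<ω}(Q), and let P := ℱ^{<ω} be ordered by inclusion. Then: (a) for every ideal I of P with I ≠ P, letting I⁺ denote the intersection of all ideals of P strictly containing I (which is an ideal of P), the set (⋃I⁺) \ (⋃I) is finite; and (b) for every X ∈ P, the set φ_Δ(X) = {I ∈ Δ(J(P)) : X ∉ I} is finite. -/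
open Set

set_option linter.unusedSectionVars false

section Aux
variable {Q : Type*} [PartialOrder Q]

lemma finUnions_union_mem {ℱ : Set (Set Q)} {A B : Set Q}
    (hA : A ∈ finUnions ℱ) (hB : B ∈ finUnions ℱ) : A ∪ B ∈ finUnions ℱ := by
  classical
  obtain ⟨G₁, h₁, rfl⟩ := hA
  obtain ⟨G₂, h₂, rfl⟩ := hB
  refine ⟨G₁ ∪ G₂, ?_, ?_⟩
  · rw [Finset.coe_union]; exact Set.union_subset h₁ h₂
  · rw [Finset.coe_union, Set.sUnion_union]

lemma mem_finUnions_of_mem {ℱ : Set (Set Q)} {F : Set Q} (hF : F ∈ ℱ) : F ∈ finUnions ℱ :=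
  ⟨{F}, by simp [hF], by simp⟩

lemma finUnions_mem_finite (hfin : ∀ q : Q, {y : Q | y ≤ q}.Finite) {ℱ : Set (Set Q)}
    (hℱ : ℱ ⊆ FinGenInit Q) {Z : Set Q} (hZ : Z ∈ finUnions ℱ) : Z.Finite := by
  obtain ⟨G, hG, rfl⟩ := hZ
  refine Set.Finite.sUnion G.finite_toSet (fun F hF => ?_)
  obtain ⟨F₀, rfl⟩ := hℱ (hG hF)
  have h : {x | ∃ y ∈ F₀, x ≤ y} = ⋃ y ∈ F₀, {x | x ≤ y} := by ext; simp
  rw [h]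
  exact F₀.finite_toSet.biUnion (fun y _ => hfin y)

lemma ideal_exists_superset {ℱ : Set (Set Q)} {I : Set (Set Q)}
    (hI : IsIdealIn (finUnions ℱ) I) {Z : Set Q} (hZfin : Z.Finite) (hZ : Z ⊆ ⋃₀ I) :
    ∃ W ∈ I, Z ⊆ W := by
  obtain ⟨hIP, ⟨Y₀, hY₀⟩, hdir, _⟩ := hI
  refine Set.Finite.induction_on (motive := fun Z _ => Z ⊆ ⋃₀ I → ∃ W ∈ I, Z ⊆ W) Z hZfin
    (fun _ => ⟨Y₀, hY₀, empty_subset _⟩) ?_ hZ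
  intro a s _ _ ih hZ'
  obtain ⟨W₁, hW₁, hsW₁⟩ := ih (fun x hx => hZ' (Set.mem_insert_of_mem a hx))
  obtain ⟨W₂, hW₂, haW₂⟩ := hZ' (Set.mem_insert a s)
  obtain ⟨W, hW, h₂, h₁⟩ := hdir W₂ hW₂ W₁ hW₁
  exact ⟨W, hW, Set.insert_subset (h₂ haW₂) (hsW₁.trans h₁)⟩

lemma ideal_mem_of_subset (hfin : ∀ q : Q, {y : Q | y ≤ q}.Finite) {ℱ : Set (Set Q)}
    (hℱ : ℱ ⊆ FinGenInit Q) {I : Set (Set Q)} (hI : IsIdealIn (finUnions ℱ) I)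
    {Z : Set Q} (hZ : Z ∈ finUnions ℱ) (hsub : Z ⊆ ⋃₀ I) : Z ∈ I := by
  obtain ⟨W, hW, hZW⟩ := ideal_exists_superset hI (finUnions_mem_finite hfin hℱ hZ) hsub
  exact hI.2.2.2 Z hZ W hW hZW

def extIdeal (ℱ : Set (Set Q)) (I : Set (Set Q)) (X : Set Q) : Set (Set Q) :=
  {Z | Z ∈ finUnions ℱ ∧ ∃ Y ∈ I, Z ⊆ Y ∪ X}

lemma extIdeal_isIdeal {ℱ I : Set (Set Q)} {X : Set Q}
    (hI : IsIdealIn (finUnions ℱ) I) (hX : X ∈ finUnions ℱ) :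
    IsIdealIn (finUnions ℱ) (extIdeal ℱ I X) := by
  obtain ⟨hIP, ⟨Y₀, hY₀⟩, hdir, _⟩ := hI
  refine ⟨fun Z hZ => hZ.1, ⟨X, hX, Y₀, hY₀, subset_union_right⟩, ?_, ?_⟩
  · rintro Z₁ ⟨hZ₁P, Y₁, hY₁, hs₁⟩ Z₂ ⟨hZ₂P, Y₂, hY₂, hs₂⟩
    obtain ⟨Y, hY, h1, h2⟩ := hdir Y₁ hY₁ Y₂ hY₂
    exact ⟨Z₁ ∪ Z₂, ⟨finUnions_union_mem hZ₁P hZ₂P, Y, hY,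
      Set.union_subset (hs₁.trans (Set.union_subset_union_left X h1))
        (hs₂.trans (Set.union_subset_union_left X h2))⟩,
      subset_union_left, subset_union_right⟩
  · rintro Z hZP W ⟨hWP, Y, hY, hs⟩ hZW
    exact ⟨hZP, Y, hY, le_trans hZW hs⟩

lemma extIdeal_ssubset {ℱ I : Set (Set Q)} {X : Set Q}
    (hI : IsIdealIn (finUnions ℱ) I) (hX : X ∈ finUnions ℱ) (hXI : X ∉ I) :
    I ⊂ extIdeal ℱ I X := by
  obtain ⟨Y₀, hY₀⟩ := hI.2.1
  constructor
  · intro Y hY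
    exact ⟨hI.1 hY, Y, hY, subset_union_left⟩
  · intro h
    exact hXI (h ⟨hX, Y₀, hY₀, subset_union_right⟩)

lemma extIdeal_sUnion_subset {ℱ I : Set (Set Q)} {X : Set Q} :
    ⋃₀ extIdeal ℱ I X ⊆ ⋃₀ I ∪ X := by
  rintro x ⟨Z, ⟨_, Y, hY, hs⟩, hxZ⟩
  rcases hs hxZ with h | h
  · exact Or.inl ⟨Y, hY, h⟩
  · exact Or.inr h


lemma ideal_eq_of_sUnion_eq (hfin : ∀ q : Q, {y : Q | y ≤ q}.Finite) {ℱ : Set (Set Q)}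
    (hℱ : ℱ ⊆ FinGenInit Q) {I I' : Set (Set Q)} (hI : IsIdealIn (finUnions ℱ) I)
    (hI' : IsIdealIn (finUnions ℱ) I') (h : ⋃₀ I = ⋃₀ I') : I = I' := by
  apply Set.Subset.antisymm
  · intro Z hZ
    exact ideal_mem_of_subset hfin hℱ hI' (hI.1 hZ) (h ▸ Set.subset_sUnion_of_mem hZ)
  · intro Z hZ
    exact ideal_mem_of_subset hfin hℱ hI (hI'.1 hZ) (h.symm ▸ Set.subset_sUnion_of_mem hZ)

lemma cm_key (hfin : ∀ q : Q, {y : Q | y ≤ q}.Finite) {ℱ : Set (Set Q)}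
    (hℱ : ℱ ⊆ FinGenInit Q) {I : Set (Set Q)} {X : Set Q}
    (hCM : CMIdealIn (finUnions ℱ) I) (hX : X ∈ finUnions ℱ) (hXI : X ∉ I) :
    ∃ q ∈ X, ⋃₀ I = ⋃₀ {F | F ∈ ℱ ∧ q ∉ F} := by
  obtain ⟨hIid, J, hJid, hIJ, hJmin⟩ := hCM
  have hJX : J ⊆ extIdeal ℱ I X :=
    hJmin _ (extIdeal_isIdeal hIid hX) (extIdeal_ssubset hIid hX hXI)
  obtain ⟨Z₀, hZ₀J, hZ₀I⟩ := Set.exists_of_ssubset hIJ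
  have hZ₀P : Z₀ ∈ finUnions ℱ := hJid.1 hZ₀J
  have hns : ¬ Z₀ ⊆ ⋃₀ I := fun h => hZ₀I (ideal_mem_of_subset hfin hℱ hIid hZ₀P h)
  obtain ⟨q, hqZ₀, hqI⟩ := Set.not_subset.mp hns
  obtain ⟨_, Y, hY, hZ₀s⟩ := hJX hZ₀J
  have hqX : q ∈ X := by
    rcases hZ₀s hqZ₀ with h | h
    · exact absurd ⟨Y, hY, h⟩ hqI
    · exact h
  refine ⟨q, hqX, Set.Subset.antisymm ?_ ?_⟩
  · rintro x ⟨W, hWI, hxW⟩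
    obtain ⟨G, hG, hGeq⟩ := hIid.1 hWI
    obtain ⟨F, hFG, hxF⟩ := by rw [hGeq] at hxW; exact hxW
    refine ⟨F, ⟨hG hFG, fun hqF => hqI ⟨W, hWI, by rw [hGeq]; exact ⟨F, hFG, hqF⟩⟩⟩, hxF⟩
  · rintro x ⟨F, ⟨hFℱ, hqF⟩, hxF⟩
    have hFP : F ∈ finUnions ℱ := mem_finUnions_of_mem hFℱ
    by_cases hFI : F ∈ I
    · exact ⟨F, hFI, hxF⟩
    · exfalso
      have hJF : J ⊆ extIdeal ℱ I F :=
        hJmin _ (extIdeal_isIdeal hIid hFP) (extIdeal_ssubset hIid hFP hFI)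
      obtain ⟨_, Y', hY', hs'⟩ := hJF hZ₀J
      rcases hs' hqZ₀ with h | h
      · exact hqI ⟨Y', hY', h⟩
      · exact hqF h

end Aux


/-- Suppose every principal initial segment of `Q` is finite, `ℱ ⊆ I_{<ω}(Q)`
and `P := ℱ^{<ω}`. Then (a) for every ideal `I ≠ P` of `P`, `I⁺` (the intersection of all
ideals strictly containing `I`) is an ideal of `P` and `(⋃I⁺) \ (⋃I)` is finite; and (b) for
every `X ∈ P`, the set `φ_Δ(X) = {I ∈ Δ(J(P)) : X ∉ I}` is finite. -/
theorem finite_plus_and_phiDelta {Q : Type*} [PartialOrder Q]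
    (hfin : ∀ q : Q, {y : Q | y ≤ q}.Finite) (ℱ : Set (Set Q)) (hℱ : ℱ ⊆ FinGenInit Q) :
    (∀ I : Set (Set Q), IsIdealIn (finUnions ℱ) I → I ≠ finUnions ℱ →
      IsIdealIn (finUnions ℱ) (⋂₀ {J : Set (Set Q) | IsIdealIn (finUnions ℱ) J ∧ I ⊂ J}) ∧
        ((⋃₀ ⋂₀ {J : Set (Set Q) | IsIdealIn (finUnions ℱ) J ∧ I ⊂ J}) \ ⋃₀ I).Finite) ∧
    ∀ X ∈ finUnions ℱ,
      {I : Set (Set Q) | CMIdealIn (finUnions ℱ) I ∧ X ∉ I}.Finite := by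
  constructor
  · intro I hI hne
    have hex : ∃ X ∈ finUnions ℱ, X ∉ I := by
      by_contra h
      push_neg at h
      exact hne (Set.Subset.antisymm hI.1 h)
    obtain ⟨X, hX, hXI⟩ := hex
    set 𝒥 := {J : Set (Set Q) | IsIdealIn (finUnions ℱ) J ∧ I ⊂ J} with h𝒥
    have hmem : extIdeal ℱ I X ∈ 𝒥 :=
      ⟨extIdeal_isIdeal hI hX, extIdeal_ssubset hI hX hXI⟩
    have hIsub : I ⊆ ⋂₀ 𝒥 := fun Z hZ => fun J hJ => hJ.2.1 hZ
    have hinterP : ⋂₀ 𝒥 ⊆ finUnions ℱ :=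
      fun Z hZ => (extIdeal_isIdeal hI hX).1 (hZ _ hmem)
    constructor
    · refine ⟨hinterP, hI.2.1.mono hIsub, ?_, ?_⟩
      · intro Z₁ hZ₁ Z₂ hZ₂
        refine ⟨Z₁ ∪ Z₂, ?_, subset_union_left, subset_union_right⟩
        intro J hJ
        obtain ⟨W, hW, h1, h2⟩ := hJ.1.2.2.1 Z₁ (hZ₁ J hJ) Z₂ (hZ₂ J hJ)
        exact hJ.1.2.2.2 _ (finUnions_union_mem (hinterP hZ₁) (hinterP hZ₂)) W hW
          (Set.union_subset h1 h2)
      · intro Z hZP W hW hZW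
        exact fun J hJ => hJ.1.2.2.2 Z hZP W (hW J hJ) hZW
    · refine Set.Finite.subset (finUnions_mem_finite hfin hℱ hX) ?_
      rintro x ⟨hx1, hx2⟩
      have : x ∈ ⋃₀ extIdeal ℱ I X := by
        obtain ⟨Z, hZ, hxZ⟩ := hx1
        exact ⟨Z, hZ _ hmem, hxZ⟩
      rcases extIdeal_sUnion_subset this with h | h
      · exact absurd h hx2
      · exact h
  · intro X hX
    have hsub : {I : Set (Set Q) | CMIdealIn (finUnions ℱ) I ∧ X ∉ I} ⊆
        ⋃ q ∈ X, {I | IsIdealIn (finUnions ℱ) I ∧ ⋃₀ I = ⋃₀ {F | F ∈ ℱ ∧ q ∉ F}} := by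
      rintro I ⟨hCM, hXI⟩
      obtain ⟨q, hqX, hq⟩ := cm_key hfin hℱ hCM hX hXI
      exact Set.mem_biUnion hqX ⟨hCM.1, hq⟩
    refine Set.Finite.subset (Set.Finite.biUnion (finUnions_mem_finite hfin hℱ hX) ?_) hsub
    intro q _
    exact Set.Subsingleton.finite (fun I hI I' hI' =>
      ideal_eq_of_sUnion_eq hfin hℱ hI.1 hI'.1 (hI.2.trans hI'.2.symm))
end

section
/- Let ⊑ be a linear order on ℕ, and let P be the poset on ℕ defined by x ≤ y iff x ≤ y in the natural order on ℕ and x ⊑ y. Suppose that P is a join-semilattice with respect to this order, and suppose there is an initial segment S of (ℕ, ⊑) with S ≠ ℕ such that infinitely many distinct nonempty initial segments of (ℕ, ⊑) having no greatest element are contained in S. Then P does not embed into [ω]^{<ω} as a join-subsemilattice. -/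
open Set

/-- Let `⊑` (here `r`) be a linear order on `ℕ` and let `P` be `ℕ` ordered by
`x ≤ y` iff `x ≤ y` in the natural order and `x ⊑ y`. Suppose `P` is a join-semilattice and
some proper initial segment `S` of `(ℕ,⊑)` contains infinitely many distinct nonempty initial
segments of `(ℕ,⊑)` without greatest element. Then `P` does not embed into `[ω]^{<ω}` as a
join-subsemilattice. -/
theorem sierpinskisation_not_embeds (r : ℕ → ℕ → Prop) (hr : IsLinearOrder ℕ r)
    (hjoin : ∀ x y : ℕ, ∃ z : ℕ, (x ≤ z ∧ r x z) ∧ (y ≤ z ∧ r y z) ∧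
      ∀ w : ℕ, (x ≤ w ∧ r x w) → (y ≤ w ∧ r y w) → (z ≤ w ∧ r z w))
    (S : Set ℕ) (hS : ∀ a b : ℕ, r a b → b ∈ S → a ∈ S) (hSne : S ≠ Set.univ)
    (hinf : {T : Set ℕ | (∀ a b : ℕ, r a b → b ∈ T → a ∈ T) ∧ T.Nonempty ∧
      (¬ ∃ g ∈ T, ∀ t ∈ T, r t g) ∧ T ⊆ S}.Infinite) :
    ¬ ∃ f : ℕ → Finset ℕ, Function.Injective f ∧
        ∀ x y z : ℕ, ((x ≤ z ∧ r x z) ∧ (y ≤ z ∧ r y z) ∧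
            ∀ w : ℕ, (x ≤ w ∧ r x w) → (y ≤ w ∧ r y w) → (z ≤ w ∧ r z w)) →
          f z = f x ∪ f y := by
  rintro ⟨f, hinj, hf⟩
  haveI : IsLinearOrder ℕ r := hr
  -- obtain an element outside S
  obtain ⟨s, hsS⟩ : ∃ s, s ∉ S := (Set.ne_univ_iff_exists_notMem S).mp hSne
  -- the family of "good" initial segments
  set 𝓖 : Set (Set ℕ) := {T : Set ℕ | (∀ a b : ℕ, r a b → b ∈ T → a ∈ T) ∧ T.Nonempty ∧
      (¬ ∃ g ∈ T, ∀ t ∈ T, r t g) ∧ T ⊆ S} with h𝓖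
  -- finite nonempty sets have a greatest element w.r.t. r
  have hmaxF : ∀ F : Finset ℕ, F.Nonempty → ∃ g ∈ F, ∀ t ∈ F, r t g := by
    intro F
    induction F using Finset.induction_on with
    | empty => intro h; exact absurd h (by simp)
    | @insert a F' ha ih =>
      intro _
      by_cases hF' : F'.Nonempty
      · obtain ⟨g, hg, hgmax⟩ := ih hF'
        rcases total_of r a g with h | h
        · refine ⟨g, Finset.mem_insert_of_mem hg, ?_⟩
          intro t ht
          rcases Finset.mem_insert.mp ht with rfl | ht'
          · exact h
          · exact hgmax t ht'
        · refine ⟨a, Finset.mem_insert_self a F', ?_⟩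
          intro t ht
          rcases Finset.mem_insert.mp ht with rfl | ht'
          · exact refl_of r t
          · exact trans_of r (hgmax t ht') h
      · have hF'e : F' = ∅ := Finset.not_nonempty_iff_eq_empty.mp hF'
        subst hF'e
        refine ⟨a, by simp, ?_⟩
        intro t ht
        simp only [Finset.mem_insert, Finset.notMem_empty, or_false] at ht
        subst ht; exact refl_of r t
  -- a nonempty set with no greatest element is infinite
  have hInf : ∀ T : Set ℕ, T.Nonempty → (¬ ∃ g ∈ T, ∀ t ∈ T, r t g) → T.Infinite := by
    intro T hne hng
    by_contra hfin
    rw [Set.not_infinite] at hfin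
    obtain ⟨g, hg, hmax⟩ := hmaxF hfin.toFinset (by
      rwa [Set.Finite.toFinset_nonempty])
    exact hng ⟨g, (Set.Finite.mem_toFinset hfin).mp hg,
      fun t ht => hmax t ((Set.Finite.mem_toFinset hfin).mpr ht)⟩
  -- infinite sets of naturals are unbounded
  have hUnb : ∀ T : Set ℕ, T.Infinite → ∀ m : ℕ, ∃ t ∈ T, m ≤ t := by
    intro T hT m
    by_contra h
    push_neg at h
    exact hT (Set.Finite.subset (Set.finite_Iic m) (fun t ht => le_of_lt (h t ht)))
  -- monotonicity of f
  have hfmono : ∀ x y : ℕ, x ≤ y → r x y → f x ⊆ f y := by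
    intro x y hxy hrxy
    have hy := hf x y y ⟨⟨hxy, hrxy⟩, ⟨le_refl y, refl_of r y⟩, fun w _ h => h⟩
    intro n hn
    rw [hy]
    exact Finset.mem_union_left _ hn
  -- good segments are closed under joins
  have hjoinT : ∀ T ∈ 𝓖, ∀ x ∈ T, ∀ y ∈ T, ∃ z ∈ T,
      (x ≤ z ∧ r x z) ∧ (y ≤ z ∧ r y z) ∧
        ∀ w : ℕ, (x ≤ w ∧ r x w) → (y ≤ w ∧ r y w) → (z ≤ w ∧ r z w) := by
    intro T hT x hx y hy
    obtain ⟨z, hz⟩ := hjoin x y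
    refine ⟨z, ?_, hz⟩
    obtain ⟨m, hm, hxm, hym⟩ : ∃ m ∈ T, r x m ∧ r y m := by
      rcases total_of r x y with h | h
      · exact ⟨y, hy, h, refl_of r y⟩
      · exact ⟨x, hx, refl_of r x, h⟩
    have hWne : ({w | w ∈ T ∧ r m w} : Set ℕ).Nonempty := ⟨m, hm, refl_of r m⟩
    have hWng : ¬ ∃ g ∈ ({w | w ∈ T ∧ r m w} : Set ℕ), ∀ t ∈ ({w | w ∈ T ∧ r m w} : Set ℕ), r t g := by
      rintro ⟨g, ⟨hgT, hmg⟩, hgmax⟩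
      refine hT.2.2.1 ⟨g, hgT, fun t ht => ?_⟩
      rcases total_of r t m with h | h
      · exact trans_of r h hmg
      · exact hgmax t ⟨ht, h⟩
    have hWinf := hInf _ hWne hWng
    obtain ⟨w, hwW, hw⟩ := hUnb _ hWinf (max x y)
    obtain ⟨hwT, hmw⟩ := hwW
    have hzw := hz.2.2 w ⟨le_trans (le_max_left x y) hw, trans_of r hxm hmw⟩
        ⟨le_trans (le_max_right x y) hw, trans_of r hym hmw⟩
    exact hT.1 z w hzw.2 hwT
  -- the union of the images
  have hcover : ∀ T ∈ 𝓖, ∀ F : Finset ℕ, ↑F ⊆ (⋃ t ∈ T, (f t : Set ℕ)) →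
      ∃ t ∈ T, ↑F ⊆ (f t : Set ℕ) := by
    intro T hT F
    induction F using Finset.induction_on with
    | empty =>
      intro _
      obtain ⟨t, ht⟩ := hT.2.1
      exact ⟨t, ht, by simp⟩
    | @insert a F' ha ih =>
      intro hsub
      obtain ⟨t₁, ht₁, hF'⟩ := ih (fun x hx => hsub (by
        simp only [Finset.coe_insert, Set.mem_insert_iff]
        exact Or.inr hx))
      have haB : a ∈ (⋃ t ∈ T, (f t : Set ℕ)) := hsub (by simp)
      obtain ⟨t₂, ht₂, hat₂⟩ := Set.mem_iUnion₂.mp haB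
      obtain ⟨z, hzT, hz⟩ := hjoinT T hT t₁ ht₁ t₂ ht₂
      have hfz := hf t₁ t₂ z hz
      refine ⟨z, hzT, ?_⟩
      intro x hx
      simp only [Finset.coe_insert, Set.mem_insert_iff] at hx
      rcases hx with rfl | hx
      · simp only [Finset.coe_union, Finset.mem_coe, hfz, Finset.mem_union]
        exact Or.inr hat₂
      · simp only [Finset.mem_coe, hfz, Finset.mem_union]
        exact Or.inl (Finset.mem_coe.mp (hF' hx))
  -- strict growth of the union along strict inclusions of good segments
  have hstrict : ∀ T ∈ 𝓖, ∀ T' ∈ 𝓖, T ⊆ T' → T ≠ T' →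
      ∃ n, n ∈ (⋃ t ∈ T', (f t : Set ℕ)) ∧ n ∉ (⋃ t ∈ T, (f t : Set ℕ)) := by
    intro T hT T' hT' hsub hne
    obtain ⟨t', ht'T', ht'T⟩ : ∃ t', t' ∈ T' ∧ t' ∉ T := by
      by_contra h
      push_neg at h
      exact hne (Set.Subset.antisymm hsub h)
    by_cases hc : (↑(f t') : Set ℕ) ⊆ (⋃ t ∈ T, (f t : Set ℕ))
    · exfalso
      obtain ⟨t₀, ht₀, hft'⟩ := hcover T hT (f t') hc
      obtain ⟨z, hz⟩ := hjoin t' t₀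
      have hfz := hf t' t₀ z hz
      have hft'sub : f t' ⊆ f t₀ := fun n hn => hft' (Finset.mem_coe.mpr hn)
      have hzt₀ : f z = f t₀ := by
        rw [hfz]
        exact Finset.union_eq_right.mpr hft'sub
      have hz0 : z = t₀ := hinj hzt₀
      exact ht'T (hT.1 t' t₀ (hz0 ▸ hz.1.2) ht₀)
    · obtain ⟨n, hn1, hn2⟩ := Set.not_subset.mp hc
      exact ⟨n, Set.mem_biUnion ht'T' hn1, hn2⟩
  -- the key bound: B T' ⊆ f s ∪ B T
  have hbound : ∀ T ∈ 𝓖, ∀ T' ∈ 𝓖,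
      (⋃ t ∈ T', (f t : Set ℕ)) ⊆ (↑(f s) : Set ℕ) ∪ (⋃ t ∈ T, (f t : Set ℕ)) := by
    intro T hT T' hT' n hn
    obtain ⟨t', ht', hnft'⟩ := Set.mem_iUnion₂.mp hn
    have hTinf := hInf T hT.2.1 hT.2.2.1
    obtain ⟨t, htT, htt'⟩ := hUnb T hTinf t'
    obtain ⟨z, hz⟩ := hjoin s t
    have hfz := hf s t z hz
    have hzS : z ∉ S := fun h => hsS (hS s z hz.1.2 h)
    have hrt'z : r t' z := by
      rcases total_of r t' z with h | h
      · exact h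
      · exact absurd (hS z t' h (hT'.2.2.2 ht')) hzS
    have ht'z : t' ≤ z := le_trans htt' hz.2.1.1
    have hsubz : f t' ⊆ f z := hfmono t' z ht'z hrt'z
    have hnz : n ∈ f z := hsubz hnft'
    rw [hfz] at hnz
    rcases Finset.mem_union.mp hnz with h | h
    · exact Or.inl (Finset.mem_coe.mpr h)
    · exact Or.inr (Set.mem_biUnion htT (Finset.mem_coe.mpr h))
  -- good segments are pairwise comparable
  have hcomp : ∀ T ∈ 𝓖, ∀ T' ∈ 𝓖, T ⊆ T' ∨ T' ⊆ T := by
    intro T hT T' hT'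
    by_contra h
    push_neg at h
    obtain ⟨h1, h2⟩ := h
    obtain ⟨a, haT, haT'⟩ := Set.not_subset.mp h1
    obtain ⟨b, hbT', hbT⟩ := Set.not_subset.mp h2
    rcases total_of r a b with hab | hab
    · exact haT' (hT'.1 a b hab hbT')
    · exact hbT (hT.1 b a hab haT)
  -- the trace map into subsets of f s
  have hEinj : Set.InjOn (fun T => (↑(f s) : Set ℕ) ∩ (⋃ t ∈ T, (f t : Set ℕ))) 𝓖 := by
    intro T hT T' hT' hEq
    by_contra hne
    simp only at hEq
    have key : ∀ A ∈ 𝓖, ∀ B ∈ 𝓖, A ⊆ B → A ≠ B →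
        (↑(f s) : Set ℕ) ∩ (⋃ t ∈ A, (f t : Set ℕ)) ≠ (↑(f s) : Set ℕ) ∩ (⋃ t ∈ B, (f t : Set ℕ)) := by
      intro A hA B hB hsub hAB hEq'
      obtain ⟨n, hn1, hn2⟩ := hstrict A hA B hB hsub hAB
      have hnfs : n ∈ (↑(f s) : Set ℕ) := by
        rcases hbound A hA B hB hn1 with h | h
        · exact h
        · exact absurd h hn2
      have : n ∈ (↑(f s) : Set ℕ) ∩ (⋃ t ∈ B, (f t : Set ℕ)) := ⟨hnfs, hn1⟩
      rw [← hEq'] at this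
      exact hn2 this.2
    rcases hcomp T hT T' hT' with hsub | hsub
    · exact key T hT T' hT' hsub hne hEq
    · exact key T' hT' T hT hsub (Ne.symm hne) hEq.symm
  -- conclude by finiteness of the powerset of f s
  have hfin : {A : Set ℕ | A ⊆ (↑(f s) : Set ℕ)}.Finite :=
    Set.Finite.finite_subsets (f s).finite_toSet
  have himg : ((fun T => (↑(f s) : Set ℕ) ∩ (⋃ t ∈ T, (f t : Set ℕ))) '' 𝓖).Finite := by
    refine hfin.subset ?_
    rintro _ ⟨T, _, rfl⟩
    exact Set.inter_subset_left
  exact (hinf.image hEinj) himg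
end
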